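/- arXiv:1201.6076 — 2 statements merged into one kernel-verified Lean document; each statement's English description precedes it below -/
import Mathlib

section
/- Let (R, M) be a commutative local ring. Then every ideal of R is a direct sum of cyclic R-modules if and only if there exist an index set Λ and elements x, y and {w_λ}_{λ∈Λ} in R such that M = Rx ⊕ Ry ⊕ (⊕_{λ∈Λ} Rw_λ), where each Rw_λ is a simple R-module and both R/Ann(x) and R/Ann(y) are principal ideal rings. -/
/-- An ideal is an internal direct sum of cyclic `R`-modules. -/
def Ideal.IsDirectSumOfCyclicsX {R : Type} [CommRing R] (I : Ideal R) : Prop :=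
  ∃ (ι : Type) (x : ι → R),
    iSupIndep (fun i => Submodule.span R ({x i} : Set R)) ∧
      (⨆ i, Submodule.span R ({x i} : Set R)) = I

section LocalHelpers

section Bridge

variable {T : Type*} [CommRing T]

theorem mem_iSup_span {κ : Type*} {a : κ → T} {g : T} (hg : g ∈ ⨆ k, Ideal.span ({a k} : Set T)) :
    ∃ (F : Finset κ) (c : κ → T), g = ∑ k ∈ F, c k * a k := by
  have h1 : (⨆ k, Ideal.span ({a k} : Set T)) = Ideal.span (Set.range a) := by
    rw [← Ideal.span_iUnion]
    congr 1
    exact Set.iUnion_singleton_eq_range a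
  rw [h1] at hg
  have : g ∈ Submodule.span T (Set.range a) := hg
  rw [Finsupp.mem_span_range_iff_exists_finsupp] at this
  obtain ⟨c, hc⟩ := this
  refine ⟨c.support, fun k => c k, ?_⟩
  rw [← hc]
  rw [Finsupp.sum]
  exact Finset.sum_congr rfl (fun k _ => (smul_eq_mul ..).symm)

theorem iSupIndep_span_of_sums {κ : Type*} {a : κ → T}
    (H : ∀ (F : Finset κ) (c : κ → T), (∑ k ∈ F, c k * a k) = 0 → ∀ k ∈ F, c k * a k = 0) :
    iSupIndep (fun k => Ideal.span ({a k} : Set T)) := by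
  intro k₀
  rw [Submodule.disjoint_def]
  intro t ht₀ ht'
  rw [Ideal.mem_span_singleton'] at ht₀
  obtain ⟨r, hr⟩ := ht₀
  rw [iSup_subtype'] at ht'
  obtain ⟨F', c', hc'⟩ := mem_iSup_span ht'
  classical
  set c : κ → T := fun k => if h : k = k₀ then -r else c' ⟨k, h⟩ with hc
  have hinj : Function.Injective (fun x : {j // j ≠ k₀} => (x : κ)) := Subtype.coe_injective
  have hsum : ∑ k ∈ F'.image (fun x : {j // j ≠ k₀} => (x : κ)), c k * a k
      = ∑ x ∈ F', c' x * a x := by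
    rw [Finset.sum_image (fun x _ y _ h => hinj h)]
    refine Finset.sum_congr rfl (fun x _ => ?_)
    simp only [hc, dif_neg x.prop]
  have hk₀notin : k₀ ∉ F'.image (fun x : {j // j ≠ k₀} => (x : κ)) := by
    simp only [Finset.mem_image]
    rintro ⟨x, -, hx⟩
    exact x.prop hx
  have hck₀ : c k₀ = -r := by rw [hc]; exact dif_pos rfl
  have htotal : ∑ k ∈ insert k₀ (F'.image (fun x : {j // j ≠ k₀} => (x : κ))), c k * a k = 0 := by
    rw [Finset.sum_insert hk₀notin, hsum, ← hc', ← hr, hck₀]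
    ring
  have hz := H _ c htotal k₀ (Finset.mem_insert_self _ _)
  rw [hck₀, neg_mul, neg_eq_zero] at hz
  rw [← hr]
  exact hz

theorem sums_of_iSupIndep_span {κ : Type*} {a : κ → T}
    (h : iSupIndep (fun k => Ideal.span ({a k} : Set T)))
    (F : Finset κ) (c : κ → T) (h0 : ∑ k ∈ F, c k * a k = 0) : ∀ k ∈ F, c k * a k = 0 := by
  classical
  intro k₀ hk₀
  have hrw : c k₀ * a k₀ = -∑ k ∈ F.erase k₀, c k * a k := by
    have h1 := Finset.add_sum_erase F (fun k => c k * a k) hk₀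
    rw [h0] at h1
    exact eq_neg_of_add_eq_zero_left h1
  have mem1 : c k₀ * a k₀ ∈ Ideal.span ({a k₀} : Set T) := Ideal.mem_span_singleton'.2 ⟨_, rfl⟩
  have mem2 : c k₀ * a k₀ ∈ ⨆ j, ⨆ (_ : j ≠ k₀), Ideal.span ({a j} : Set T) := by
    rw [hrw]
    refine neg_mem (Submodule.sum_mem _ (fun k hk => ?_))
    have hne : k ≠ k₀ := Finset.ne_of_mem_erase hk
    exact Submodule.mem_iSup_of_mem k (Submodule.mem_iSup_of_mem hne
      (Ideal.mem_span_singleton'.2 ⟨_, rfl⟩))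
  exact Submodule.disjoint_def.1 (h k₀) _ mem1 mem2

end Bridge

open IsLocalRing

variable {T : Type} [CommRing T] [IsLocalRing T]

theorem unit_or_mem (r : T) : IsUnit r ∨ r ∈ maximalIdeal T := by
  by_cases h : IsUnit r
  · exact Or.inl h
  · exact Or.inr h

theorem mem_max_of_not_unit {r : T} (h : ¬IsUnit r) : r ∈ maximalIdeal T := h

theorem unit_sub_mem {u r : T} (hu : IsUnit u) (hr : r ∈ maximalIdeal T) : IsUnit (u - r) := by
  by_cases h : IsUnit (u - r)
  · exact h
  · exfalso
    have h1 : u - r ∈ maximalIdeal T := h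
    have : u ∈ maximalIdeal T := by
      have := add_mem h1 hr
      simpa using this
    exact this hu

theorem eq_zero_of_unit_mul {u g : T} (hu : IsUnit u) (h : u * g = 0) : g = 0 := by
  obtain ⟨v, rfl⟩ := hu
  have := congrArg (fun t => ((v⁻¹ : Tˣ) : T) * t) h
  simpa [← mul_assoc] using this

/-- span {w} is a simple module iff `w ≠ 0` and `M w = 0`. -/
theorem isSimpleModule_span_of (w : T) (hw : w ≠ 0)
    (hann : ∀ r ∈ maximalIdeal T, r * w = 0) :
    IsSimpleModule T (Ideal.span ({w} : Set T)) := by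
  rw [isSimpleModule_iff_isAtom]
  constructor
  · simpa [Ideal.span_singleton_eq_bot] using hw
  · intro b hb
    by_contra hbne
    obtain ⟨t, htb, htne⟩ := Submodule.exists_mem_ne_zero_of_ne_bot hbne
    have htw : t ∈ Ideal.span ({w} : Set T) := hb.le htb
    obtain ⟨r, hr⟩ := Ideal.mem_span_singleton'.1 htw
    rcases unit_or_mem r with hu | hm
    · have hwb : w ∈ b := by
        obtain ⟨v, rfl⟩ := hu
        have : ((v⁻¹ : Tˣ) : T) * t ∈ b := Submodule.smul_mem b _ htb
        rw [← hr, ← mul_assoc] at this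
        simpa using this
      have : Ideal.span ({w} : Set T) ≤ b := by
        rw [Ideal.span_le]; simpa using hwb
      exact absurd (le_antisymm hb.le this) (ne_of_lt hb)
    · rw [hann r hm] at hr
      exact htne hr.symm

theorem simple_span_facts {w : T} (h : IsSimpleModule T (Ideal.span ({w} : Set T))) :
    w ≠ 0 ∧ ∀ r ∈ maximalIdeal T, r * w = 0 := by
  rw [isSimpleModule_iff_isAtom] at h
  constructor
  · intro hw
    apply h.1
    simpa [Ideal.span_singleton_eq_bot] using hw
  · intro r hr
    by_contra hrw
    have hle : Ideal.span ({r * w} : Set T) ≤ Ideal.span ({w} : Set T) := by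
      rw [Ideal.span_le]
      simpa using Ideal.mem_span_singleton'.2 ⟨r, rfl⟩
    rcases lt_or_eq_of_le hle with hlt | heq
    · have := h.2 _ hlt
      rw [Ideal.span_singleton_eq_bot] at this
      exact hrw this
    · have hwmem : w ∈ Ideal.span ({r * w} : Set T) := by
        rw [heq]; exact Ideal.mem_span_singleton'.2 ⟨1, by ring⟩
      obtain ⟨c, hc⟩ := Ideal.mem_span_singleton'.1 hwmem
      have h1 : (1 - c * r) * w = 0 := by ring_nf; rw [mul_comm] at hc ⊢; linear_combination -hc
      have hunit : IsUnit (1 - c * r) :=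
        unit_sub_mem isUnit_one (Ideal.mul_mem_left _ c hr)
      have : w = 0 := eq_zero_of_unit_mul hunit h1
      apply h.1
      simpa [Ideal.span_singleton_eq_bot] using this

end LocalHelpers

section PrincipalMax

open IsLocalRing

theorem dssoc_of_principal {T' : Type} [CommRing T'] {I : Ideal T'} (g : T')
    (h : I = Ideal.span ({g} : Set T')) : Ideal.IsDirectSumOfCyclicsX I := by
  refine ⟨PUnit, fun _ => g, ?_, ?_⟩
  · intro i
    have hb : (⨆ j, ⨆ (_ : j ≠ i), Submodule.span T' ({g} : Set T')) = ⊥ :=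
      le_bot_iff.1 (iSup_le fun j => iSup_le fun hj => absurd (Subsingleton.elim j i) hj)
    show Disjoint (Submodule.span T' ({g} : Set T')) (⨆ j, ⨆ (_ : j ≠ i), Submodule.span T' ({g} : Set T'))
    rw [hb]
    exact disjoint_bot_right
  · rw [iSup_const, h]

variable {T : Type} [CommRing T] [IsLocalRing T]

theorem exists_unit_pow_rep {m g : T} (hm : maximalIdeal T = Ideal.span ({m} : Set T))
    (hg : ∃ n, g ∉ Ideal.span ({m ^ n} : Set T)) :
    ∃ (j : ℕ) (c : T), IsUnit c ∧ c * m ^ j = g ∧ g ∉ Ideal.span ({m ^ (j+1)} : Set T) := by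
  classical
  have hn := Nat.find_spec hg
  have hnpos : Nat.find hg ≠ 0 := by
    intro h0
    rw [h0] at hn
    exact hn (by simpa using Ideal.mem_span_singleton'.2 ⟨g, by ring⟩)
  obtain ⟨j, hj⟩ : ∃ j, Nat.find hg = j + 1 :=
    ⟨Nat.find hg - 1, (Nat.succ_pred_eq_of_ne_zero hnpos).symm⟩
  have hnj : g ∉ Ideal.span ({m ^ (j+1)} : Set T) := by rw [← hj]; exact hn
  have hmemj : g ∈ Ideal.span ({m ^ j} : Set T) := by
    by_contra h
    have h2 : Nat.find hg ≤ j := Nat.find_le h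
    omega
  obtain ⟨c, hc⟩ := Ideal.mem_span_singleton'.1 hmemj
  refine ⟨j, c, ?_, hc, hnj⟩
  by_contra hcu
  have hcm : c ∈ Ideal.span ({m} : Set T) := by rw [← hm]; exact hcu
  obtain ⟨c', hc'⟩ := Ideal.mem_span_singleton'.1 hcm
  apply hnj
  refine Ideal.mem_span_singleton'.2 ⟨c', ?_⟩
  rw [← hc, ← hc']
  ring

theorem P_eq_bot {m : T} (hm : maximalIdeal T = Ideal.span ({m} : Set T))
    (hdssoc : Ideal.IsDirectSumOfCyclicsX (⨅ n : ℕ, Ideal.span ({m ^ n} : Set T))) :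
    (⨅ n : ℕ, Ideal.span ({m ^ n} : Set T)) = ⊥ := by
  classical
  by_cases hnil : ∃ k, m ^ k = 0
  · obtain ⟨k, hk⟩ := hnil
    refine le_bot_iff.1 (le_trans (iInf_le _ k) ?_)
    rw [hk]
    rw [show Ideal.span ({(0:T)} : Set T) = ⊥ from Ideal.span_singleton_eq_bot.2 rfl]
  push_neg at hnil
  have hann : ∀ x : T, x * m = 0 → x ∈ (⨅ n : ℕ, Ideal.span ({m ^ n} : Set T)) := by
    intro x hx
    by_contra hxP
    have hgex : ∃ n, x ∉ Ideal.span ({m ^ n} : Set T) := by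
      by_contra h
      push_neg at h
      exact hxP (Submodule.mem_iInf _ |>.2 h)
    obtain ⟨j, c, hcu, hrep, _⟩ := exists_unit_pow_rep hm hgex
    have h1 : c * m ^ (j+1) = 0 := by
      rw [pow_succ, ← mul_assoc, hrep, hx]
    exact hnil (j+1) (eq_zero_of_unit_mul hcu h1)
  have hmP : ∀ q ∈ (⨅ n : ℕ, Ideal.span ({m ^ n} : Set T)),
      ∃ r ∈ (⨅ n : ℕ, Ideal.span ({m ^ n} : Set T)), q = r * m := by
    intro q hq
    have h1 : q ∈ Ideal.span ({m ^ 1} : Set T) := (Submodule.mem_iInf _).1 hq 1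
    rw [pow_one] at h1
    obtain ⟨r, hr⟩ := Ideal.mem_span_singleton'.1 h1
    refine ⟨r, ?_, hr.symm⟩
    rw [Submodule.mem_iInf]
    intro n
    have hq' : q ∈ Ideal.span ({m ^ (n+1)} : Set T) := (Submodule.mem_iInf _).1 hq (n+1)
    obtain ⟨s, hs⟩ := Ideal.mem_span_singleton'.1 hq'
    have h2 : (r - s * m ^ n) * m = 0 := by
      rw [sub_mul, hr, mul_assoc, ← pow_succ, hs, sub_self]
    have h3 : r - s * m ^ n ∈ Ideal.span ({m ^ n} : Set T) :=
      (Submodule.mem_iInf _).1 (hann _ h2) n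
    have h4 : s * m ^ n ∈ Ideal.span ({m ^ n} : Set T) := Ideal.mem_span_singleton'.2 ⟨s, rfl⟩
    have := add_mem h3 h4
    simpa using this
  obtain ⟨ι, z, hind, hsup⟩ := hdssoc
  by_contra hPbot
  have hexj : ∃ j, z j ≠ 0 := by
    by_contra h
    push_neg at h
    apply hPbot
    rw [← hsup]
    refine le_bot_iff.1 (iSup_le fun j => ?_)
    rw [h j]
    rw [show Submodule.span T ({(0:T)} : Set T) = ⊥ from Ideal.span_singleton_eq_bot.2 rfl]
  obtain ⟨j₀, hj₀⟩ := hexj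
  have hz0 : z j₀ ∈ (⨅ n : ℕ, Ideal.span ({m ^ n} : Set T)) := by
    rw [← hsup]
    exact Submodule.mem_iSup_of_mem j₀ (Submodule.mem_span_singleton_self _)
  obtain ⟨r, hrP, hr⟩ := hmP _ hz0
  rw [← hsup] at hrP
  obtain ⟨F, c, hc⟩ := mem_iSup_span hrP
  have hsum0 : ∑ j ∈ insert j₀ F,
      (((if j ∈ F then c j else 0) * m) - (if j = j₀ then 1 else 0)) * z j = 0 := by
    have hsplit : ∀ j, (((if j ∈ F then c j else 0) * m) - (if j = j₀ then 1 else 0)) * z j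
        = ((if j ∈ F then c j else 0) * m) * z j - (if j = j₀ then 1 else 0) * z j := by
      intro j; ring
    rw [Finset.sum_congr rfl (fun j _ => hsplit j), Finset.sum_sub_distrib]
    have hA : ∑ j ∈ insert j₀ F, ((if j ∈ F then c j else 0) * m) * z j
        = ∑ j ∈ F, (c j * m) * z j := by
      by_cases hj₀F : j₀ ∈ F
      · rw [Finset.insert_eq_self.2 hj₀F]
        exact Finset.sum_congr rfl (fun j hj => by rw [if_pos hj])
      · rw [Finset.sum_insert hj₀F, if_neg hj₀F]
        have : ((0:T) * m) * z j₀ = 0 := by ring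
        rw [this, zero_add]
        exact Finset.sum_congr rfl (fun j hj => by rw [if_pos hj])
    have hB : ∑ j ∈ insert j₀ F, (if j = j₀ then (1:T) else 0) * z j = z j₀ := by
      rw [Finset.sum_eq_single j₀]
      · rw [if_pos rfl, one_mul]
      · intro j _ hj; rw [if_neg hj, zero_mul]
      · intro h; exact absurd (Finset.mem_insert_self _ _) h
    rw [hA, hB, hr, hc, Finset.sum_mul]
    rw [Finset.sum_congr rfl (fun j _ => by ring : ∀ j ∈ F, c j * z j * m = (c j * m) * z j)]
    ring
  have hterm := sums_of_iSupIndep_span hind _ _ hsum0 j₀ (Finset.mem_insert_self _ _)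
  rw [if_pos rfl] at hterm
  have h5 : (1 - (if j₀ ∈ F then c j₀ else 0) * m) * z j₀ = 0 := by linear_combination -hterm
  have hu : IsUnit (1 - (if j₀ ∈ F then c j₀ else 0) * m) :=
    unit_sub_mem isUnit_one (by
      rw [hm]
      exact Ideal.mem_span_singleton'.2 ⟨_, rfl⟩)
  exact hj₀ (eq_zero_of_unit_mul hu h5)

theorem ideal_eq_pow {m : T} (hm : maximalIdeal T = Ideal.span ({m} : Set T))
    (hP : (⨅ n : ℕ, Ideal.span ({m ^ n} : Set T)) = ⊥) (J : Ideal T) :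
    J = ⊥ ∨ ∃ n, J = Ideal.span ({m ^ n} : Set T) := by
  classical
  by_cases hJ : J = ⊥
  · exact Or.inl hJ
  right
  have hout : ∀ g : T, g ≠ 0 → ∃ n, g ∉ Ideal.span ({m ^ n} : Set T) := by
    intro g hg0
    by_contra h
    push_neg at h
    have : g ∈ (⨅ n : ℕ, Ideal.span ({m ^ n} : Set T)) := (Submodule.mem_iInf _).2 h
    rw [hP] at this
    exact hg0 this
  have hex : ∃ n, ∃ g, g ∈ J ∧ g ≠ 0 ∧ g ∉ Ideal.span ({m ^ (n+1)} : Set T) ∧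
      ∃ c, IsUnit c ∧ c * m ^ n = g := by
    obtain ⟨g, hgJ, hg0⟩ := Submodule.exists_mem_ne_zero_of_ne_bot hJ
    obtain ⟨j, c, hcu, hrep, hnot⟩ := exists_unit_pow_rep hm (hout g hg0)
    exact ⟨j, g, hgJ, hg0, hnot, c, hcu, hrep⟩
  obtain ⟨g, hgJ, hg0, hgnot, c, hcu, hrep⟩ := Nat.find_spec hex
  refine ⟨Nat.find hex, le_antisymm ?_ ?_⟩
  · intro h hh
    by_cases hh0 : h = 0
    · rw [hh0]; exact zero_mem _
    · obtain ⟨j, d, hdu, hdrep, hdnot⟩ := exists_unit_pow_rep hm (hout h hh0)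
      have hjge : Nat.find hex ≤ j := Nat.find_le ⟨h, hh, hh0, hdnot, d, hdu, hdrep⟩
      rw [← hdrep]
      refine Ideal.mem_span_singleton'.2 ⟨d * m ^ (j - Nat.find hex), ?_⟩
      rw [mul_assoc, ← pow_add]
      congr 2
      omega
  · rw [Ideal.span_le]
    intro t ht
    rw [Set.mem_singleton_iff] at ht
    subst ht
    obtain ⟨u, rfl⟩ := hcu
    have h1 : ((u⁻¹ : Tˣ) : T) * g ∈ J := Ideal.mul_mem_left _ _ hgJ
    rw [← hrep, ← mul_assoc] at h1
    simpa using h1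

theorem pir_of_principal_max {m : T} (hm : maximalIdeal T = Ideal.span ({m} : Set T))
    (H : ∀ I : Ideal T, Ideal.IsDirectSumOfCyclicsX I) : IsPrincipalIdealRing T := by
  have hP := P_eq_bot hm (H _)
  constructor
  intro J
  rcases ideal_eq_pow hm hP J with h | ⟨n, h⟩
  · refine ⟨⟨0, ?_⟩⟩
    rw [h]
    exact (Ideal.span_singleton_eq_bot.2 rfl).symm
  · exact ⟨⟨m ^ n, h⟩⟩

end PrincipalMax

section QuotientTransfer

open IsLocalRing

variable {R : Type} [CommRing R] [IsLocalRing R]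

theorem mem_torsionOf {x r : R} : r ∈ Ideal.torsionOf R R x ↔ r * x = 0 := by
  rw [Ideal.mem_torsionOf_iff, smul_eq_mul]

theorem quot_nontrivial {x : R} (hx : x ≠ 0) : Nontrivial (R ⧸ Ideal.torsionOf R R x) := by
  refine Ideal.Quotient.nontrivial_iff.mpr ?_
  intro h
  have : (1 : R) ∈ Ideal.torsionOf R R x := h ▸ Submodule.mem_top
  rw [mem_torsionOf, one_mul] at this
  exact hx this

theorem quot_isLocalRing {x : R} (hx : x ≠ 0) : IsLocalRing (R ⧸ Ideal.torsionOf R R x) := by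
  have := quot_nontrivial hx
  exact IsLocalRing.of_surjective' (Ideal.Quotient.mk _) Ideal.Quotient.mk_surjective

theorem quot_maximalIdeal {x : R} (hx : x ≠ 0) (hxM : x ∈ maximalIdeal R)
    (hMx : ∀ m ∈ maximalIdeal R, ∃ c, m * x = c * (x * x)) :
    have := quot_isLocalRing hx
    maximalIdeal (R ⧸ Ideal.torsionOf R R x) =
      Ideal.span ({Ideal.Quotient.mk _ x} : Set (R ⧸ Ideal.torsionOf R R x)) := by
  have := quot_isLocalRing hx
  have hxbar : ¬IsUnit (Ideal.Quotient.mk (Ideal.torsionOf R R x) x) := by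
    intro hu
    obtain ⟨ρ, hρ⟩ := isUnit_iff_exists_inv.1 hu
    obtain ⟨s, rfl⟩ := Ideal.Quotient.mk_surjective ρ
    rw [← map_mul, ← map_one (Ideal.Quotient.mk (Ideal.torsionOf R R x)),
      Ideal.Quotient.mk_eq_mk_iff_sub_mem] at hρ
    rw [mem_torsionOf, sub_mul, one_mul, sub_eq_zero] at hρ
    have h1 : (1 - x * s) * x = 0 := by rw [sub_mul, one_mul]; linear_combination -hρ
    have hu2 : IsUnit (1 - x * s) :=
      unit_sub_mem isUnit_one (Ideal.mul_mem_right _ _ hxM)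
    exact hx (eq_zero_of_unit_mul hu2 h1)
  apply le_antisymm
  · intro ρ hρ
    obtain ⟨r, rfl⟩ := Ideal.Quotient.mk_surjective ρ
    have hr : r ∈ maximalIdeal R := by
      intro hru
      exact (IsLocalRing.mem_maximalIdeal _).1 hρ (hru.map _)
    obtain ⟨c, hc⟩ := hMx r hr
    refine Ideal.mem_span_singleton'.2 ⟨Ideal.Quotient.mk _ c, ?_⟩
    rw [← map_mul, Ideal.Quotient.mk_eq_mk_iff_sub_mem, mem_torsionOf, sub_mul, sub_eq_zero]
    linear_combination -hc
  · rw [Ideal.span_le]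
    intro t ht
    rw [Set.mem_singleton_iff] at ht
    subst ht
    exact (IsLocalRing.mem_maximalIdeal _).2 hxbar

theorem quot_dssoc {x : R} (H : ∀ I : Ideal R, Ideal.IsDirectSumOfCyclicsX I)
    (J : Ideal (R ⧸ Ideal.torsionOf R R x)) : Ideal.IsDirectSumOfCyclicsX J := by
  classical
  set mk := Ideal.Quotient.mk (Ideal.torsionOf R R x) with hmk
  set K : Ideal R :=
    { carrier := {t | ∃ r, mk r ∈ J ∧ t = r * x}
      add_mem' := by
        rintro a b ⟨r₁, hr₁, rfl⟩ ⟨r₂, hr₂, rfl⟩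
        exact ⟨r₁ + r₂, by rw [map_add]; exact add_mem hr₁ hr₂, by ring⟩
      zero_mem' := ⟨0, by rw [map_zero]; exact zero_mem J, by ring⟩
      smul_mem' := by
        rintro c a ⟨r, hr, rfl⟩
        exact ⟨c * r, by rw [map_mul]; exact Ideal.mul_mem_left _ _ hr,
          by rw [smul_eq_mul]; ring⟩ } with hK
  obtain ⟨ι, z, hind, hsup⟩ := H K
  have hzK : ∀ t, ∃ j, mk j ∈ J ∧ z t = j * x := by
    intro t
    have : z t ∈ K := by
      rw [← hsup]
      exact Submodule.mem_iSup_of_mem t (Submodule.mem_span_singleton_self _)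
    exact this
  choose j hjJ hjx using hzK
  refine ⟨ι, fun t => mk (j t), ?_, ?_⟩
  · apply iSupIndep_span_of_sums
    intro F c hc0 t₀ ht₀
    have hlift : ∀ t, ∃ c', mk c' = c t := fun t => Ideal.Quotient.mk_surjective (c t)
    choose c' hc' using hlift
    have h1 : mk (∑ t ∈ F, c' t * j t) = 0 := by
      rw [map_sum]
      calc ∑ t ∈ F, mk (c' t * j t) = ∑ t ∈ F, c t * mk (j t) := by
            refine Finset.sum_congr rfl fun t _ => ?_
            rw [map_mul, hc']
        _ = 0 := hc0
    rw [Ideal.Quotient.eq_zero_iff_mem, mem_torsionOf, Finset.sum_mul] at h1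
    have h2 : ∑ t ∈ F, (c' t) * z t = 0 := by
      rw [← h1]
      exact Finset.sum_congr rfl fun t _ => by rw [hjx, mul_assoc]
    have h3 := sums_of_iSupIndep_span hind F c' h2 t₀ ht₀
    rw [← hc', ← map_mul, Ideal.Quotient.eq_zero_iff_mem, mem_torsionOf]
    rw [hjx, ← mul_assoc] at h3
    exact h3
  · apply le_antisymm
    · refine iSup_le fun t => ?_
      rw [Submodule.span_le, Set.singleton_subset_iff]
      exact hjJ t
    · intro ρ hρ
      obtain ⟨r, rfl⟩ := Ideal.Quotient.mk_surjective ρ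
      have hrx : r * x ∈ K := ⟨r, hρ, rfl⟩
      rw [← hsup] at hrx
      obtain ⟨F, c, hc⟩ := mem_iSup_span hrx
      have h1 : mk r = ∑ t ∈ F, mk (c t * j t) := by
        rw [← map_sum, Ideal.Quotient.mk_eq_mk_iff_sub_mem, mem_torsionOf, sub_mul, hc,
          Finset.sum_mul, sub_eq_zero]
        exact Finset.sum_congr rfl fun t _ => by rw [hjx, mul_assoc]
      rw [h1]
      refine Submodule.sum_mem _ fun t ht => ?_
      refine Submodule.mem_iSup_of_mem t ?_
      rw [map_mul]
      exact Ideal.mul_mem_left _ _ (Submodule.mem_span_singleton_self _)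

end QuotientTransfer

section Forward

open IsLocalRing

variable {R : Type} [CommRing R] [IsLocalRing R]

theorem prod_eq_zero_of_indep {ι : Type} {mm : ι → R}
    (hind : iSupIndep fun i => Submodule.span R ({mm i} : Set R)) {i j : ι} (hij : i ≠ j) :
    mm i * mm j = 0 := by
  have h1 : mm i * mm j ∈ Submodule.span R ({mm i} : Set R) :=
    Ideal.mem_span_singleton'.2 ⟨mm j, mul_comm _ _⟩
  have h2 : mm i * mm j ∈ ⨆ k, ⨆ (_ : k ≠ i), Submodule.span R ({mm k} : Set R) :=
    Submodule.mem_iSup_of_mem j (Submodule.mem_iSup_of_mem (Ne.symm hij)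
      (Ideal.mem_span_singleton'.2 ⟨mm i, rfl⟩))
  exact Submodule.disjoint_def.1 (hind i) _ h1 h2

theorem mul_gen {ι : Type} {mm : ι → R}
    (hind : iSupIndep fun i => Submodule.span R ({mm i} : Set R))
    (hsup : (⨆ i, Submodule.span R ({mm i} : Set R)) = maximalIdeal R) (i : ι)
    {r : R} (hr : r ∈ maximalIdeal R) : ∃ c, r * mm i = c * (mm i * mm i) := by
  classical
  rw [← hsup] at hr
  obtain ⟨F, c, hc⟩ := mem_iSup_span hr
  refine ⟨if i ∈ F then c i else 0, ?_⟩
  rw [hc, Finset.sum_mul]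
  by_cases hiF : i ∈ F
  · rw [Finset.sum_eq_single_of_mem i hiF (fun b _ hbne => by
      rw [mul_assoc, prod_eq_zero_of_indep hind hbne, mul_zero]), if_pos hiF]
    ring
  · rw [Finset.sum_eq_zero (fun b hb => by
      rw [mul_assoc, prod_eq_zero_of_indep hind (fun h => hiF (by rw [← h]; exact hb)), mul_zero]), if_neg hiF]
    ring

theorem no_three_nonsimple (H : ∀ I : Ideal R, Ideal.IsDirectSumOfCyclicsX I) {a b c : R}
    (hab : a * b = 0) (hac : a * c = 0) (hbc : b * c = 0)
    (ha : a * a ≠ 0) (hb : b * b ≠ 0) (hc : c * c ≠ 0) : False := by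
  classical
  obtain ⟨ι, z, hind, hsup⟩ := H (Ideal.span {a + b} ⊔ Ideal.span {b + c})
  have hz : ∀ t, ∃ p q, z t = p * (a + b) + q * (b + c) := by
    intro t
    have hm : z t ∈ Ideal.span ({a+b} : Set R) ⊔ Ideal.span ({b+c} : Set R) := by
      rw [← hsup]
      exact Submodule.mem_iSup_of_mem t (Submodule.mem_span_singleton_self _)
    obtain ⟨p', hp, q', hq, hpq⟩ := Submodule.mem_sup.1 hm
    obtain ⟨p, hp'⟩ := Ideal.mem_span_singleton'.1 hp
    obtain ⟨q, hq'⟩ := Ideal.mem_span_singleton'.1 hq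
    exact ⟨p, q, by rw [← hpq, ← hp', ← hq']⟩
  choose ρ σ hzdef using hz
  have hab' : a + b ∈ ⨆ t, Submodule.span R ({z t} : Set R) := by
    rw [hsup]; exact Submodule.mem_sup_left (Submodule.mem_span_singleton_self _)
  have hbc' : b + c ∈ ⨆ t, Submodule.span R ({z t} : Set R) := by
    rw [hsup]; exact Submodule.mem_sup_right (Submodule.mem_span_singleton_self _)
  obtain ⟨F₁, u₀, hu₀⟩ := mem_iSup_span hab'
  obtain ⟨F₂, v₀, hv₀⟩ := mem_iSup_span hbc'
  set F := F₁ ∪ F₂ with hF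
  set u : ι → R := fun t => if t ∈ F₁ then u₀ t else 0 with hu
  set v : ι → R := fun t => if t ∈ F₂ then v₀ t else 0 with hv
  have hab2 : a + b = ∑ t ∈ F, u t * z t := by
    rw [hu₀]
    rw [← Finset.sum_subset Finset.subset_union_left
      (fun t _ ht1 => by simp [hu, ht1])]
    exact Finset.sum_congr rfl fun t ht => by simp [hu, ht]
  have hbc2 : b + c = ∑ t ∈ F, v t * z t := by
    rw [hv₀]
    rw [← Finset.sum_subset Finset.subset_union_right
      (fun t _ ht1 => by simp [hv, ht1])]
    exact Finset.sum_congr rfl fun t ht => by simp [hv, ht]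
  have haz : ∀ t, a * z t = ρ t * (a * a) := by
    intro t; rw [hzdef t]
    linear_combination (ρ t + σ t) * hab + σ t * hac
  have hbz : ∀ t, b * z t = (ρ t + σ t) * (b * b) := by
    intro t; rw [hzdef t]
    linear_combination (ρ t) * hab + (σ t) * hbc
  have hcz : ∀ t, c * z t = σ t * (c * c) := by
    intro t; rw [hzdef t]
    linear_combination (ρ t) * hac + (ρ t + σ t) * hbc
  -- Key componentwise identities
  have hKey1 : ∀ t ∈ F, v t * (ρ t * (a * a)) = 0 := by
    intro t ht
    have h0 : ∑ s ∈ F, (a * v s) * z s = 0 := by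
      have : a * (b + c) = 0 := by linear_combination hab + hac
      rw [← this, hbc2, Finset.mul_sum]
      exact Finset.sum_congr rfl fun s _ => by ring
    have := sums_of_iSupIndep_span hind F _ h0 t ht
    rw [show (a * v t) * z t = v t * (a * z t) by ring, haz t] at this
    exact this
  have hKey2 : ∀ t ∈ F, u t * (σ t * (c * c)) = 0 := by
    intro t ht
    have h0 : ∑ s ∈ F, (c * u s) * z s = 0 := by
      have : c * (a + b) = 0 := by linear_combination hac + hbc
      rw [← this, hab2, Finset.mul_sum]
      exact Finset.sum_congr rfl fun s _ => by ring
    have := sums_of_iSupIndep_span hind F _ h0 t ht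
    rw [show (c * u t) * z t = u t * (c * z t) by ring, hcz t] at this
    exact this
  have hKey3 : ∀ t ∈ F, (u t - v t) * ((ρ t + σ t) * (b * b)) = 0 := by
    intro t ht
    have h0 : ∑ s ∈ F, (b * (u s - v s)) * z s = 0 := by
      have h1 : b * (a + b) - b * (b + c) = 0 := by linear_combination hab - hbc
      calc ∑ s ∈ F, (b * (u s - v s)) * z s
          = b * (∑ s ∈ F, u s * z s) - b * (∑ s ∈ F, v s * z s) := by
            rw [Finset.mul_sum, Finset.mul_sum, ← Finset.sum_sub_distrib]
            exact Finset.sum_congr rfl fun s _ => by ring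
        _ = 0 := by rw [← hab2, ← hbc2, h1]
    have := sums_of_iSupIndep_span hind F _ h0 t ht
    rw [show (b * (u t - v t)) * z t = (u t - v t) * (b * z t) by ring, hbz t] at this
    exact this
  -- existence of a unit coefficient
  have hEx : (1 - ∑ t ∈ F, u t * ρ t) * (a * a) = 0 := by
    have h1 : a * (a + b) = a * a := by linear_combination hab
    calc (1 - ∑ t ∈ F, u t * ρ t) * (a * a)
        = a * a - (∑ t ∈ F, u t * ρ t) * (a * a) := by ring
      _ = a * a - ∑ t ∈ F, u t * (a * z t) := by
          rw [Finset.sum_mul]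
          congr 1
          exact Finset.sum_congr rfl fun t _ => by rw [haz t]; ring
      _ = a * a - a * (a + b) := by
          rw [hab2, Finset.mul_sum]
          congr 1
          exact Finset.sum_congr rfl fun t _ => by ring
      _ = 0 := by rw [h1, sub_self]
  have hsumunit : ¬(∑ t ∈ F, u t * ρ t) ∈ maximalIdeal R := by
    intro hmem
    exact ha (eq_zero_of_unit_mul (unit_sub_mem isUnit_one hmem) hEx)
  have hexi : ∃ i ∈ F, IsUnit (u i * ρ i) := by
    by_contra h
    push_neg at h
    exact hsumunit (Ideal.sum_mem _ fun t ht => mem_max_of_not_unit (h t ht))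
  obtain ⟨i, hiF, hui⟩ := hexi
  have hρu : IsUnit (ρ i) := isUnit_of_mul_isUnit_right hui
  have huu : IsUnit (u i) := isUnit_of_mul_isUnit_left hui
  have hva : v i * (a * a) = 0 := by
    have h1 := hKey1 i hiF
    have h2 : ρ i * (v i * (a * a)) = 0 := by linear_combination h1
    exact eq_zero_of_unit_mul hρu h2
  have hvM : v i ∈ maximalIdeal R := by
    intro hvu
    exact ha (eq_zero_of_unit_mul hvu hva)
  have huvu : IsUnit (u i - v i) := unit_sub_mem huu hvM
  have hb2 : (ρ i + σ i) * (b * b) = 0 := eq_zero_of_unit_mul huvu (hKey3 i hiF)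
  have hσc : σ i * (c * c) = 0 := eq_zero_of_unit_mul huu (hKey2 i hiF)
  rcases unit_or_mem (σ i) with hσu | hσM
  · exact hc (eq_zero_of_unit_mul hσu hσc)
  · have hρσ : IsUnit (ρ i + σ i) := by
      simpa [sub_neg_eq_add] using unit_sub_mem hρu (neg_mem hσM)
    exact hb (eq_zero_of_unit_mul hρσ hb2)

theorem torsionOf_zero_eq_top : Ideal.torsionOf R R (0 : R) = ⊤ := by
  ext r
  simp [mem_torsionOf]

theorem pir_of_subsingleton {S : Type} [CommRing S] [Subsingleton S] :
    IsPrincipalIdealRing S := by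
  constructor
  intro J
  refine ⟨⟨0, ?_⟩⟩
  ext t
  simp [Subsingleton.elim t 0]

theorem subsingleton_quot_top {I : Ideal R} (h : I = ⊤) : Subsingleton (R ⧸ I) := by
  refine subsingleton_of_forall_eq 0 fun ρ => ?_
  obtain ⟨r, rfl⟩ := Ideal.Quotient.mk_surjective ρ
  rw [Ideal.Quotient.eq_zero_iff_mem, h]
  exact Submodule.mem_top

theorem pir_quot_gen {ι : Type} {mm : ι → R}
    (hind : iSupIndep fun i => Submodule.span R ({mm i} : Set R))
    (hsup : (⨆ i, Submodule.span R ({mm i} : Set R)) = maximalIdeal R)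
    (H : ∀ I : Ideal R, Ideal.IsDirectSumOfCyclicsX I) (i : ι) :
    IsPrincipalIdealRing (R ⧸ Ideal.torsionOf R R (mm i)) := by
  by_cases h0 : mm i = 0
  · have := subsingleton_quot_top (I := Ideal.torsionOf R R (mm i))
      (by rw [h0]; exact torsionOf_zero_eq_top)
    exact pir_of_subsingleton
  · have hloc := quot_isLocalRing h0
    have hxM : mm i ∈ maximalIdeal R := by
      rw [← hsup]
      exact Submodule.mem_iSup_of_mem i (Submodule.mem_span_singleton_self _)
    have hmax := quot_maximalIdeal h0 hxM (fun r hr => mul_gen hind hsup i hr)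
    exact pir_of_principal_max hmax (quot_dssoc H)

theorem indep_of_embed {κ ι : Type} {a : κ → R} {mm : ι → R}
    (hind : iSupIndep fun i => Submodule.span R ({mm i} : Set R))
    (pinj : ∀ k, a k ≠ 0 → ι)
    (hval : ∀ k (h : a k ≠ 0), mm (pinj k h) = a k)
    (hinj : ∀ k k' (h : a k ≠ 0) (h' : a k' ≠ 0), k ≠ k' → pinj k h ≠ pinj k' h') :
    iSupIndep fun k => Submodule.span R ({a k} : Set R) := by
  classical
  apply iSupIndep_span_of_sums
  intro F c hc0 k₀ hk₀
  by_cases h0 : a k₀ = 0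
  · rw [h0, mul_zero]
  -- total extension of pinj
  have hne : Nonempty ι := ⟨pinj k₀ h0⟩
  set e : κ → ι := fun k => if h : a k ≠ 0 then pinj k h else Classical.arbitrary ι with he
  have heval : ∀ k, a k ≠ 0 → mm (e k) = a k := by
    intro k h
    rw [he]
    simp only [dif_pos h]
    exact hval k h
  set G := F.filter (fun k => a k ≠ 0) with hG
  have hGsum : ∑ k ∈ G, c k * a k = 0 := by
    have h1 : ∑ k ∈ Finset.filter (fun k => a k ≠ 0) F, c k * a k = ∑ k ∈ F, c k * a k :=
      Finset.sum_filter_of_ne (fun k _ hne0 h0' => hne0 (by rw [h0', mul_zero]))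
    rw [hG, h1, hc0]
  have heinj : ∀ k ∈ G, ∀ k' ∈ G, e k = e k' → k = k' := by
    intro k hk k' hk' hee
    by_contra hne'
    have h1 : a k ≠ 0 := (Finset.mem_filter.1 hk).2
    have h2 : a k' ≠ 0 := (Finset.mem_filter.1 hk').2
    apply hinj k k' h1 h2 hne'
    rw [he] at hee
    simpa only [dif_pos h1, dif_pos h2] using hee
  set d : ι → R := fun i => if h : ∃ k ∈ G, e k = i then c h.choose else 0 with hd
  have hdval : ∀ k ∈ G, d (e k) = c k := by
    intro k hk
    have hex : ∃ k' ∈ G, e k' = e k := ⟨k, hk, rfl⟩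
    rw [hd]
    simp only [dif_pos hex]
    have := hex.choose_spec
    rw [heinj _ this.1 _ hk this.2]
  have hsum2 : ∑ i ∈ G.image e, d i * mm i = 0 := by
    rw [Finset.sum_image heinj]
    rw [← hGsum]
    refine Finset.sum_congr rfl fun k hk => ?_
    rw [hdval k hk, heval k (Finset.mem_filter.1 hk).2]
  have hterm := sums_of_iSupIndep_span hind _ _ hsum2 (e k₀)
    (Finset.mem_image_of_mem e (Finset.mem_filter.2 ⟨hk₀, h0⟩))
  rw [hdval k₀ (Finset.mem_filter.2 ⟨hk₀, h0⟩), heval k₀ h0] at hterm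
  exact hterm

def RHSfwd (R : Type) [CommRing R] [IsLocalRing R] : Prop :=
  ∃ (Λ : Type) (x y : R) (w : Λ → R),
    iSupIndep (Sum.elim
      ![Submodule.span R ({x} : Set R), Submodule.span R ({y} : Set R)]
      (fun l : Λ => Submodule.span R ({w l} : Set R))) ∧
    Submodule.span R ({x} : Set R) ⊔ Submodule.span R ({y} : Set R) ⊔
      (⨆ l, Submodule.span R ({w l} : Set R)) = IsLocalRing.maximalIdeal R ∧
    (∀ l, IsSimpleModule R (Submodule.span R ({w l} : Set R))) ∧
    IsPrincipalIdealRing (R ⧸ Ideal.torsionOf R R x) ∧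
    IsPrincipalIdealRing (R ⧸ Ideal.torsionOf R R y)

theorem elim_eq_span {Λ : Type} (x y : R) (w : Λ → R) :
    (Sum.elim
      ![Submodule.span R ({x} : Set R), Submodule.span R ({y} : Set R)]
      (fun l : Λ => Submodule.span R ({w l} : Set R)))
    = fun k => Submodule.span R ({(Sum.elim ![x, y] w) k} : Set R) := by
  funext k
  rcases k with i | l
  · fin_cases i <;> simp
  · rfl

theorem fwd_main {ι : Type} {mm : ι → R}
    (hind : iSupIndep fun i => Submodule.span R ({mm i} : Set R))
    (hsup : (⨆ i, Submodule.span R ({mm i} : Set R)) = maximalIdeal R)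
    (H : ∀ I : Ideal R, Ideal.IsDirectSumOfCyclicsX I)
    (i₀ : ι) (oj : Option ι)
    (hoj : ∀ j₀, oj = some j₀ → j₀ ≠ i₀)
    (hcov : ∀ i, mm i ≠ 0 → mm i * mm i = 0 ∨ i = i₀ ∨ oj = some i) :
    RHSfwd R := by
  classical
  set x := mm i₀ with hxdef
  set y := oj.elim 0 mm with hydef
  set j₁ : ι := if h : oj.isSome then oj.get h else i₀ with hj₁
  have hyfacts : y ≠ 0 → oj = some j₁ ∧ y = mm j₁ ∧ j₁ ≠ i₀ := by
    intro hy0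
    cases hoj' : oj with
    | none => exact absurd (by rw [hydef, hoj']; rfl) hy0
    | some j =>
      have hjj : j₁ = j := by rw [hj₁]; simp [hoj']
      refine ⟨by rw [hjj], by rw [hydef, hoj', hjj]; rfl, ?_⟩
      rw [hjj]
      exact hoj j hoj'
  set Λ := {i : ι // mm i ≠ 0 ∧ mm i * mm i = 0 ∧ i ≠ i₀ ∧ oj ≠ some i} with hΛ
  set w : Λ → R := fun l => mm l.val with hw
  set a : (Fin 2 ⊕ Λ) → R := Sum.elim ![x, y] w with hadef
  have ha0 : a (Sum.inl 0) = x := by simp [hadef]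
  have ha1 : a (Sum.inl 1) = y := by simp [hadef]
  have har : ∀ l : Λ, a (Sum.inr l) = mm l.val := fun l => rfl
  set pinj : (Fin 2 ⊕ Λ) → ι := Sum.elim ![i₀, j₁] Subtype.val with hpinj
  have hp0 : pinj (Sum.inl 0) = i₀ := by simp [hpinj]
  have hp1 : pinj (Sum.inl 1) = j₁ := by simp [hpinj]
  have hpr : ∀ l : Λ, pinj (Sum.inr l) = l.val := fun l => rfl
  refine ⟨Λ, x, y, w, ?_, ?_, ?_, ?_, ?_⟩
  · -- independence
    rw [elim_eq_span]
    refine indep_of_embed hind (fun k _ => pinj k) ?_ ?_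
    · rintro (i | l) h
      · fin_cases i
        · exact rfl
        · exact ((hyfacts h).2.1).symm
      · exact rfl
    · rintro (i | l) (i' | l') h h' hkk
      · fin_cases i <;> fin_cases i'
        · exact absurd rfl hkk
        · exact fun he => (hyfacts h').2.2 (Eq.symm he)
        · exact fun he => (hyfacts h).2.2 he
        · exact absurd rfl hkk
      · fin_cases i
        · exact fun he => l'.prop.2.2.1 (Eq.symm he)
        · exact fun he => l'.prop.2.2.2 ((hyfacts h).1.trans (congrArg some he))
      · fin_cases i'
        · exact fun he => l.prop.2.2.1 he
        · exact fun he => l.prop.2.2.2 ((hyfacts h').1.trans (congrArg some (Eq.symm he)))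
      · exact fun he => hkk (congrArg Sum.inr (Subtype.ext he))
  · -- sup equality
    rw [← hsup]
    apply le_antisymm
    · refine sup_le (sup_le ?_ ?_) ?_
      · exact le_iSup (fun i => Submodule.span R ({mm i} : Set R)) i₀
      · by_cases hy0 : y = 0
        · rw [hy0, show Submodule.span R ({(0:R)} : Set R) = ⊥ from
            Ideal.span_singleton_eq_bot.2 rfl]
          exact bot_le
        · rw [(hyfacts hy0).2.1]
          exact le_iSup (fun i => Submodule.span R ({mm i} : Set R)) j₁
      · exact iSup_le fun l => le_iSup (fun i => Submodule.span R ({mm i} : Set R)) l.val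
    · refine iSup_le fun i => ?_
      by_cases h0 : mm i = 0
      · rw [h0, show Submodule.span R ({(0:R)} : Set R) = ⊥ from
          Ideal.span_singleton_eq_bot.2 rfl]
        exact bot_le
      by_cases hii₀ : i = i₀
      · subst hii₀
        exact le_sup_of_le_left (le_sup_of_le_left le_rfl)
      by_cases hioj : oj = some i
      · have hyi : y = mm i := by rw [hydef, hioj]; rfl
        rw [← hyi]
        exact le_sup_of_le_left (le_sup_of_le_right le_rfl)
      have hsq : mm i * mm i = 0 := by
        rcases hcov i h0 with h | h | h
        · exact h
        · exact absurd h hii₀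
        · exact absurd h hioj
      refine le_sup_of_le_right ?_
      exact le_iSup (fun l : Λ => Submodule.span R ({w l} : Set R)) ⟨i, h0, hsq, hii₀, hioj⟩
  · -- simplicity
    intro l
    refine isSimpleModule_span_of _ l.prop.1 ?_
    intro r hr
    obtain ⟨c, hc⟩ := mul_gen hind hsup l.val hr
    rw [hw]
    rw [hc, l.prop.2.1, mul_zero]
  · exact pir_quot_gen hind hsup H i₀
  · by_cases hy0 : y = 0
    · have := subsingleton_quot_top (I := Ideal.torsionOf R R y)
        (by rw [hy0]; exact torsionOf_zero_eq_top)
      exact pir_of_subsingleton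
    · rw [(hyfacts hy0).2.1]
      exact pir_quot_gen hind hsup H j₁

theorem forward_dir (H : ∀ I : Ideal R, Ideal.IsDirectSumOfCyclicsX I) : RHSfwd R := by
  classical
  obtain ⟨ι, mm, hind, hsup⟩ := H (maximalIdeal R)
  by_cases hz : ∀ i, mm i = 0
  · refine ⟨Empty, 0, 0, fun l => l.elim, ?_, ?_, fun l => l.elim, ?_, ?_⟩
    · intro k
      have hbk : (Sum.elim
          ![Submodule.span R ({(0:R)} : Set R), Submodule.span R ({(0:R)} : Set R)]
          (fun l : Empty => Submodule.span R ({(l.elim : R)} : Set R))) k = ⊥ := by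
        rcases k with i | l
        · fin_cases i <;>
            simp [show Submodule.span R ({(0:R)} : Set R) = ⊥ from Ideal.span_singleton_eq_bot.2 rfl]
        · exact l.elim
      rw [hbk]
      exact disjoint_bot_left
    · have h1 : maximalIdeal R = ⊥ := by
        rw [← hsup]
        refine le_bot_iff.1 (iSup_le fun i => ?_)
        rw [hz i, show Submodule.span R ({(0:R)} : Set R) = ⊥ from Ideal.span_singleton_eq_bot.2 rfl]
      rw [h1, show Submodule.span R ({(0:R)} : Set R) = ⊥ from Ideal.span_singleton_eq_bot.2 rfl,
        iSup_of_empty]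
      simp
    · have := subsingleton_quot_top (I := Ideal.torsionOf R R (0:R)) torsionOf_zero_eq_top
      exact pir_of_subsingleton
    · have := subsingleton_quot_top (I := Ideal.torsionOf R R (0:R)) torsionOf_zero_eq_top
      exact pir_of_subsingleton
  · push_neg at hz
    obtain ⟨i₁, hi₁⟩ := hz
    by_cases hD : ∃ i, mm i ≠ 0 ∧ mm i * mm i ≠ 0
    · obtain ⟨i₀, hi₀, hsq₀⟩ := hD
      by_cases hD2 : ∃ j, j ≠ i₀ ∧ mm j ≠ 0 ∧ mm j * mm j ≠ 0
      · obtain ⟨j₀, hjne, hj₀, hsqj⟩ := hD2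
        refine fwd_main hind hsup H i₀ (some j₀) (fun j hj => by injection hj with h; rw [← h]; exact hjne) ?_
        intro i h0
        by_cases hsq : mm i * mm i = 0
        · exact Or.inl hsq
        by_cases hii₀ : i = i₀
        · exact Or.inr (Or.inl hii₀)
        by_cases hij₀ : i = j₀
        · exact Or.inr (Or.inr (by rw [hij₀]))
        exfalso
        exact no_three_nonsimple H
          (prod_eq_zero_of_indep hind hjne.symm)
          (prod_eq_zero_of_indep hind (fun h => hii₀ h.symm))
          (prod_eq_zero_of_indep hind (fun h => hij₀ h.symm))
          hsq₀ hsqj hsq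
      · refine fwd_main hind hsup H i₀ none (fun j hj => by cases hj) ?_
        intro i h0
        by_cases hsq : mm i * mm i = 0
        · exact Or.inl hsq
        by_cases hii₀ : i = i₀
        · exact Or.inr (Or.inl hii₀)
        exact absurd ⟨i, hii₀, h0, hsq⟩ hD2
    · refine fwd_main hind hsup H i₁ none (fun j hj => by cases hj) ?_
      intro i h0
      by_cases hsq : mm i * mm i = 0
      · exact Or.inl hsq
      exact absurd ⟨i, h0, hsq⟩ hD

end Forward

section Backward

open IsLocalRing

variable {R : Type} [CommRing R] [IsLocalRing R]

theorem zorn_semisimple (I₀ : Ideal R) (hI₀ : ∀ g ∈ I₀, ∀ r, r ∈ maximalIdeal R → r * g = 0) :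
    ∃ T : Set R, (∀ t ∈ T, t ∈ I₀) ∧
      (∀ (F : Finset R), ↑F ⊆ T → ∀ c : R → R, (∑ t ∈ F, c t * t) = 0 → ∀ t ∈ F, c t * t = 0) ∧
      (⨆ t : T, Ideal.span ({(t : R)} : Set R)) = I₀ := by
  classical
  set S : Set (Set R) := {T | (∀ t ∈ T, t ∈ I₀ ∧ t ≠ 0) ∧
    ∀ (F : Finset R), ↑F ⊆ T → ∀ c : R → R, (∑ t ∈ F, c t * t) = 0 → ∀ t ∈ F, c t * t = 0}
    with hSdef
  have hzorn : ∃ m, Maximal (· ∈ S) m := by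
    apply zorn_subset S
    intro c hcS hchain
    rcases Set.eq_empty_or_nonempty c with rfl | hcne
    · refine ⟨∅, ⟨by simp, ?_⟩, by simp⟩
      intro F hF c' _ t ht
      exact absurd (hF ht) (by simp)
    · refine ⟨⋃₀ c, ⟨?_, ?_⟩, fun s hs => Set.subset_sUnion_of_mem hs⟩
      · rintro t ⟨s, hsc, hts⟩
        exact (hcS hsc).1 t hts
      · intro F hF cf hsum t ht
        have hne : Nonempty c := hcne.to_subtype
        have hdir : Directed (· ⊆ ·) (fun i : c => (i : Set R)) := hchain.directed
        have hsub : ↑F ⊆ ⋃ i : c, (i : Set R) := by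
          intro u hu
          have h1 := hF hu
          rw [Set.sUnion_eq_iUnion] at h1
          exact h1
        obtain ⟨i, hi⟩ := hdir.exists_mem_subset_of_finset_subset_biUnion hsub
        exact (hcS i.prop).2 F hi cf hsum t ht
  obtain ⟨T, hTS, hTmaxle⟩ := hzorn
  refine ⟨T, fun t ht => (hTS.1 t ht).1, hTS.2, ?_⟩
  apply le_antisymm
  · refine iSup_le fun t => ?_
    rw [Ideal.span_le, Set.singleton_subset_iff]
    exact (hTS.1 t t.prop).1
  · intro g hg
    by_contra hgnot
    have hg0 : g ≠ 0 := by rintro rfl; exact hgnot (zero_mem _)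
    have hgT : g ∉ T := fun hgT =>
      hgnot (Submodule.mem_iSup_of_mem ⟨g, hgT⟩ (Submodule.mem_span_singleton_self _))
    have hins : insert g T ∈ S := by
      constructor
      · intro t ht
        rcases Set.mem_insert_iff.1 ht with rfl | h
        · exact ⟨hg, hg0⟩
        · exact hTS.1 t h
      · intro F hF cf hsum t ht
        by_cases hgF : g ∈ F
        · have hrest : ∀ s ∈ F.erase g, s ∈ T := by
            intro s hs
            rcases Set.mem_insert_iff.1 (hF (Finset.mem_coe.2 (Finset.mem_of_mem_erase hs)))
              with h | h
            · exact absurd h (Finset.mem_erase.1 hs).1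
            · exact h
          have hsum' : cf g * g + ∑ s ∈ F.erase g, cf s * s = 0 := by
            have h2 := Finset.add_sum_erase F (fun s => cf s * s) hgF
            rw [hsum] at h2
            exact h2
          have hcfg : cf g * g = 0 := by
            rcases unit_or_mem (cf g) with hu | hm
            · exfalso
              apply hgnot
              obtain ⟨v, hv⟩ := hu
              have hrestmem : ∑ s ∈ F.erase g, cf s * s
                  ∈ ⨆ t : T, Ideal.span ({(t:R)} : Set R) := by
                refine Submodule.sum_mem _ fun s hs => ?_
                exact Submodule.mem_iSup_of_mem ⟨s, hrest s hs⟩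
                  (Ideal.mem_span_singleton'.2 ⟨cf s, rfl⟩)
              have hgeq : g = (-((v⁻¹ : Rˣ) : R)) * ∑ s ∈ F.erase g, cf s * s := by
                have h2 : (v : R) * g = -∑ s ∈ F.erase g, cf s * s := by
                  rw [hv]; exact eq_neg_of_add_eq_zero_left hsum'
                calc g = ((v⁻¹ : Rˣ) : R) * ((v : R) * g) := by
                      rw [← mul_assoc]; simp
                  _ = _ := by rw [h2]; ring
              rw [hgeq]
              exact Ideal.mul_mem_left _ _ hrestmem
            · exact hI₀ g hg _ hm
          have hsum'' : ∑ s ∈ F.erase g, cf s * s = 0 := by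
            rw [hcfg, zero_add] at hsum'; exact hsum'
          by_cases htg : t = g
          · rw [htg]; exact hcfg
          · exact hTS.2 (F.erase g) (fun s hs => hrest s hs) cf hsum'' t
              (Finset.mem_erase.2 ⟨htg, ht⟩)
        · have hFT : ↑F ⊆ T := by
            intro s hs
            rcases Set.mem_insert_iff.1 (hF hs) with h | h
            · exact absurd (h ▸ Finset.mem_coe.1 hs) hgF
            · exact h
          exact hTS.2 F hFT cf hsum t ht
    have hsub := hTmaxle hins (Set.subset_insert g T)
    exact hgT (hsub (Set.mem_insert g T))

end Backward

section Backward2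

open IsLocalRing

variable {R : Type} [CommRing R] [IsLocalRing R]

theorem sum_split {β : Type} [DecidableEq β] (F : Finset β) (f : β → R) (x : β) :
    ∑ k ∈ F, f k = (if x ∈ F then f x else 0) + ∑ k ∈ F.erase x, f k := by
  by_cases hx : x ∈ F
  · rw [if_pos hx, Finset.add_sum_erase F f hx]
  · rw [if_neg hx, Finset.erase_eq_of_notMem hx, zero_add]

theorem master {I : Ideal R} (p q : R) (hpI : p ∈ I) (hqI : q ∈ I) (T : Set R)
    (hTI : ∀ t ∈ T, t ∈ I)
    (hTzero : ∀ (F : Finset R), ↑F ⊆ T → ∀ c : R → R, (∑ t ∈ F, c t * t) = 0 →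
      ∀ t ∈ F, c t * t = 0)
    (hgen : ∀ g ∈ I, ∃ r s h, h ∈ (⨆ t : T, Ideal.span ({(t:R)} : Set R)) ∧
      g = r * p + s * q + h)
    (hzero : ∀ r s h, h ∈ (⨆ t : T, Ideal.span ({(t:R)} : Set R)) → r * p + s * q + h = 0 →
      r * p = 0 ∧ s * q = 0 ∧ h = 0) :
    Ideal.IsDirectSumOfCyclicsX I := by
  classical
  set a : Option (Option T) → R := fun k => k.elim p (fun k' => k'.elim q Subtype.val) with ha
  have ha0 : a none = p := rfl
  have ha1 : a (some none) = q := rfl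
  have har : ∀ t : T, a (some (some t)) = (t : R) := fun t => rfl
  refine ⟨Option (Option T), a, ?_, ?_⟩
  · apply iSupIndep_span_of_sums
    intro F c hc0 k₀ hk₀
    set r : R := if none ∈ F then c none else 0 with hr
    set s : R := if some none ∈ F then c (some none) else 0 with hs
    set G : Finset (Option (Option T)) := (F.erase none).erase (some none) with hG
    have hGmem : ∀ k ∈ G, ∃ t : T, k = some (some t) := by
      intro k hk
      have h1 : k ≠ some none := (Finset.mem_erase.1 hk).1
      have h2 : k ≠ none := (Finset.mem_erase.1 (Finset.mem_of_mem_erase hk)).1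
      match k with
      | none => exact absurd rfl h2
      | some none => exact absurd rfl h1
      | some (some t) => exact ⟨t, rfl⟩
    have hsplit : r * p + s * q + ∑ k ∈ G, c k * a k = 0 := by
      rw [← hc0, sum_split F (fun k => c k * a k) none,
        sum_split (F.erase none) (fun k => c k * a k) (some none)]
      have e1 : (if none ∈ F then c none * a none else 0) = r * p := by
        by_cases h : none ∈ F <;> simp [hr, h, ha0]
      have e2 : (if some none ∈ F.erase none then c (some none) * a (some none) else 0)
          = s * q := by
        have hmem : some none ∈ F.erase none ↔ some none ∈ F := by
          simp [Finset.mem_erase]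
        by_cases h : some none ∈ F
        · rw [if_pos (hmem.2 h), hs, if_pos h, ha1]
        · rw [if_neg (fun hh => h (hmem.1 hh)), hs, if_neg h, zero_mul]
      rw [e1, e2, hG, add_assoc]
    have hGsum_mem : (∑ k ∈ G, c k * a k) ∈ ⨆ t : T, Ideal.span ({(t:R)} : Set R) := by
      refine Submodule.sum_mem _ fun k hk => ?_
      obtain ⟨t, rfl⟩ := hGmem k hk
      exact Submodule.mem_iSup_of_mem t (Ideal.mem_span_singleton'.2 ⟨c _, rfl⟩)
    obtain ⟨hrp, hsq, hGzero⟩ := hzero r s _ hGsum_mem hsplit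
    -- transfer to hTzero
    have hainj : ∀ k ∈ G, ∀ k' ∈ G, a k = a k' → k = k' := by
      intro k hk k' hk' he
      obtain ⟨t, rfl⟩ := hGmem k hk
      obtain ⟨t', rfl⟩ := hGmem k' hk'
      rw [har, har] at he
      rw [Subtype.ext he]
    set d : R → R := fun v => if h : ∃ k ∈ G, a k = v then c h.choose else 0 with hd
    have hdval : ∀ k ∈ G, d (a k) = c k := by
      intro k hk
      have hex : ∃ k' ∈ G, a k' = a k := ⟨k, hk, rfl⟩
      rw [hd]
      simp only [dif_pos hex]
      have hspec := hex.choose_spec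
      rw [hainj _ hspec.1 _ hk hspec.2]
    have hTsub : ↑(G.image a) ⊆ T := by
      intro v hv
      obtain ⟨k, hk, rfl⟩ := Finset.mem_image.1 (Finset.mem_coe.1 hv)
      obtain ⟨t, rfl⟩ := hGmem k hk
      rw [har]
      exact t.prop
    have hTsum : ∑ v ∈ G.image a, d v * v = 0 := by
      rw [Finset.sum_image hainj]
      rw [← hGzero]
      exact Finset.sum_congr rfl fun k hk => by rw [hdval k hk]
    have hTterms := hTzero (G.image a) hTsub d hTsum
    -- conclude for k₀
    match k₀, hk₀ with
    | none, hk₀ => rw [← hrp, hr, if_pos hk₀, ha0]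
    | some none, hk₀ => rw [← hsq, hs, if_pos hk₀, ha1]
    | some (some t), hk₀ =>
      have hkG : some (some t) ∈ G := by
        rw [hG]
        exact Finset.mem_erase.2 ⟨by simp, Finset.mem_erase.2 ⟨by simp, hk₀⟩⟩
      have := hTterms (a (some (some t))) (Finset.mem_image_of_mem a hkG)
      rw [hdval _ hkG] at this
      exact this
  · apply le_antisymm
    · refine iSup_le fun k => ?_
      rw [Submodule.span_le, Set.singleton_subset_iff]
      match k with
      | none => exact hpI
      | some none => exact hqI
      | some (some t) => exact hTI t t.prop
    · intro g hg
      obtain ⟨r, s, h, hmem, hrep⟩ := hgen g hg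
      rw [hrep]
      refine add_mem (add_mem ?_ ?_) ?_
      · exact Submodule.mem_iSup_of_mem none (Ideal.mem_span_singleton'.2 ⟨r, by rw [ha0]⟩)
      · exact Submodule.mem_iSup_of_mem (some none)
          (Ideal.mem_span_singleton'.2 ⟨s, by rw [ha1]⟩)
      · refine (iSup_le fun t => ?_ : (⨆ t : T, Ideal.span ({(t:R)} : Set R)) ≤ _) hmem
        exact le_iSup (fun k => Submodule.span R ({a k} : Set R)) (some (some t))

end Backward2

section Backward3

open IsLocalRing

variable {R : Type} [CommRing R] [IsLocalRing R]

theorem pow_mem_span_pow {z : R} {i j : ℕ} (hij : i ≤ j) :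
    z ^ j ∈ Ideal.span ({z ^ i} : Set R) :=
  Ideal.mem_span_singleton'.2 ⟨z ^ (j - i), by rw [← pow_add]; congr 1; omega⟩

theorem strict_pow {z : R} (hzM : z ∈ maximalIdeal R) {j : ℕ} (hzj : z ^ j ≠ 0) :
    z ^ j ∉ Ideal.span ({z ^ (j+1)} : Set R) := by
  intro hmem
  obtain ⟨c, hc⟩ := Ideal.mem_span_singleton'.1 hmem
  have h1 : (1 - c * z) * z ^ j = 0 := by linear_combination -hc
  exact hzj (eq_zero_of_unit_mul
    (unit_sub_mem isUnit_one (Ideal.mul_mem_left _ c hzM)) h1)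

theorem chain_classify {x : R} (hx0 : x ≠ 0) (hxM : x ∈ maximalIdeal R)
    (hMx : ∀ m ∈ maximalIdeal R, ∃ c, m * x = c * (x * x))
    (hpir : IsPrincipalIdealRing (R ⧸ Ideal.torsionOf R R x))
    (N : Ideal R) (hN : N ≤ Ideal.span ({x} : Set R)) :
    N = ⊥ ∨ ∃ j, 1 ≤ j ∧ N = Ideal.span ({x ^ j} : Set R) := by
  classical
  have hloc := quot_isLocalRing hx0
  have hmax := quot_maximalIdeal hx0 hxM hMx
  obtain ⟨g, hg⟩ := (hpir.principal
    (⨅ n : ℕ, Ideal.span ({(Ideal.Quotient.mk (Ideal.torsionOf R R x) x) ^ n} :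
      Set (R ⧸ Ideal.torsionOf R R x)))).principal
  have hP := P_eq_bot hmax (dssoc_of_principal g hg)
  set J : Ideal (R ⧸ Ideal.torsionOf R R x) :=
    { carrier := {ρ | ∃ r, ρ = Ideal.Quotient.mk (Ideal.torsionOf R R x) r ∧ r * x ∈ N}
      add_mem' := by
        rintro ρ₁ ρ₂ ⟨r₁, rfl, h₁⟩ ⟨r₂, rfl, h₂⟩
        exact ⟨r₁ + r₂, by rw [map_add], by rw [add_mul]; exact add_mem h₁ h₂⟩
      zero_mem' := ⟨0, by rw [map_zero], by rw [zero_mul]; exact zero_mem N⟩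
      smul_mem' := by
        intro cq ρ hρ
        obtain ⟨r, rfl, hr⟩ := hρ
        obtain ⟨c, rfl⟩ := Ideal.Quotient.mk_surjective cq
        exact ⟨c * r, by rw [map_mul, smul_eq_mul],
          by rw [mul_assoc]; exact Ideal.mul_mem_left _ _ hr⟩ } with hJ
  rcases ideal_eq_pow hmax hP J with hJb | ⟨n, hJn⟩
  · left
    refine le_bot_iff.1 fun t ht => ?_
    obtain ⟨r, hr⟩ := Ideal.mem_span_singleton'.1 (hN ht)
    have hmem : Ideal.Quotient.mk (Ideal.torsionOf R R x) r ∈ J := ⟨r, rfl, by rw [hr]; exact ht⟩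
    rw [hJb] at hmem
    have h1 : r * x = 0 := by
      have h2 : r ∈ Ideal.torsionOf R R x := by
        rw [← Ideal.Quotient.eq_zero_iff_mem]
        exact (Submodule.mem_bot _).1 hmem
      exact mem_torsionOf.1 h2
    rw [Submodule.mem_bot, ← hr, h1]
  · right
    refine ⟨n + 1, by omega, le_antisymm ?_ ?_⟩
    · intro t ht
      obtain ⟨r, hr⟩ := Ideal.mem_span_singleton'.1 (hN ht)
      have hmem : Ideal.Quotient.mk (Ideal.torsionOf R R x) r ∈ J := ⟨r, rfl, by rw [hr]; exact ht⟩
      rw [hJn] at hmem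
      obtain ⟨ρ, hρ⟩ := Ideal.mem_span_singleton'.1 hmem
      obtain ⟨c, rfl⟩ := Ideal.Quotient.mk_surjective ρ
      have h1 : (c * x ^ n - r) * x = 0 := by
        refine mem_torsionOf.1 ?_
        rw [← Ideal.Quotient.eq_zero_iff_mem, map_sub, map_mul, map_pow, hρ, sub_self]
      refine Ideal.mem_span_singleton'.2 ⟨c, ?_⟩
      rw [← hr, pow_succ, ← mul_assoc]
      linear_combination h1
    · rw [Ideal.span_le, Set.singleton_subset_iff]
      have hmem : (Ideal.Quotient.mk (Ideal.torsionOf R R x) x) ^ n ∈ J := by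
        rw [hJn]; exact Submodule.mem_span_singleton_self _
      obtain ⟨r, hrmk, hrN⟩ := hmem
      have h1 : (x ^ n - r) * x = 0 := by
        refine mem_torsionOf.1 ?_
        rw [← Ideal.Quotient.eq_zero_iff_mem, map_sub, map_pow, ← hrmk, sub_self]
      have h3 : x ^ (n + 1) = r * x := by rw [pow_succ]; linear_combination h1
      show x ^ (n+1) ∈ N
      rw [h3]
      exact hrN

theorem attain_lemma {z : R} (hzM : z ∈ maximalIdeal R)
    (hchain : ∀ N : Ideal R, N ≤ Ideal.span ({z} : Set R) →
      N = ⊥ ∨ ∃ j, 1 ≤ j ∧ z ^ j ≠ 0 ∧ N = Ideal.span ({z ^ j} : Set R))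
    (hzmul : ∀ c ∈ maximalIdeal R, ∀ a : ℕ, 1 ≤ a → ∃ c₁, c * z ^ a = c₁ * z ^ (a+1))
    {A : Ideal R} (hAz : A ≤ Ideal.span ({z} : Set R)) (hA0 : A ≠ ⊥) :
    ∃ a, 1 ≤ a ∧ z ^ a ≠ 0 ∧ A = Ideal.span ({z ^ a} : Set R) ∧
      ∃ ε, IsUnit ε ∧ ε * z ^ a ∈ A := by
  rcases hchain A hAz with h | ⟨a, ha1, hza0, hAa⟩
  · exact absurd h hA0
  refine ⟨a, ha1, hza0, hAa, ?_⟩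
  by_contra hno
  push_neg at hno
  have hsub : A ≤ Ideal.span ({z ^ (a+1)} : Set R) := by
    intro ξ hξ
    obtain ⟨c, hc⟩ := Ideal.mem_span_singleton'.1 (hAa ▸ hξ)
    rcases unit_or_mem c with hcu | hcM
    · exact absurd (hc ▸ hξ) (hno c hcu)
    · obtain ⟨c₁, hc₁⟩ := hzmul c hcM a ha1
      rw [← hc, hc₁]
      exact Ideal.mem_span_singleton'.2 ⟨c₁, rfl⟩
  exact strict_pow hzM hza0 (hsub (hAa ▸ Submodule.mem_span_singleton_self _))

end Backward3

section BackwardMain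

open IsLocalRing

variable {R : Type} [CommRing R] [IsLocalRing R]

theorem backward_dir {Λ : Type} {x y : R} {w : Λ → R}
    (hind : iSupIndep (Sum.elim
      ![Submodule.span R ({x} : Set R), Submodule.span R ({y} : Set R)]
      (fun l : Λ => Submodule.span R ({w l} : Set R))))
    (hsup : Submodule.span R ({x} : Set R) ⊔ Submodule.span R ({y} : Set R) ⊔
      (⨆ l, Submodule.span R ({w l} : Set R)) = maximalIdeal R)
    (hsimple : ∀ l, IsSimpleModule R (Submodule.span R ({w l} : Set R)))
    (hpx : IsPrincipalIdealRing (R ⧸ Ideal.torsionOf R R x))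
    (hpy : IsPrincipalIdealRing (R ⧸ Ideal.torsionOf R R y))
    (I : Ideal R) : Ideal.IsDirectSumOfCyclicsX I := by
  classical
  by_cases hIM : I ≤ maximalIdeal R
  case neg =>
    have hI : I = ⊤ := by
      by_contra h
      exact hIM (le_maximalIdeal h)
    exact dssoc_of_principal 1 (by rw [hI, Ideal.span_singleton_one])
  set X := Submodule.span R ({x} : Set R) with hX
  set Y := Submodule.span R ({y} : Set R) with hY
  set S := ⨆ l, Submodule.span R ({w l} : Set R) with hS
  set f : (Fin 2 ⊕ Λ) → Submodule R R :=
    Sum.elim ![X, Y] (fun l : Λ => Submodule.span R ({w l} : Set R)) with hf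
  have hf0 : f (Sum.inl 0) = X := by simp [hf]
  have hf1 : f (Sum.inl 1) = Y := by simp [hf]
  have hfr : ∀ l, f (Sum.inr l) = Submodule.span R ({w l} : Set R) := fun l => rfl
  have hdisjX : ∀ g ∈ X, g ∈ Y ⊔ S → g = 0 := by
    intro g hgX hgYS
    refine Submodule.disjoint_def.1 (hind (Sum.inl 0)) g (by rw [hf0]; exact hgX) ?_
    have hYle : Y ≤ ⨆ k, ⨆ (_ : k ≠ Sum.inl 0), f k := by
      rw [← hf1]
      exact le_iSup₂ (f := fun k (_ : k ≠ Sum.inl 0) => f k) (Sum.inl 1)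
        (fun h => absurd (Sum.inl_injective h) (by decide))
    have hSle : S ≤ ⨆ k, ⨆ (_ : k ≠ Sum.inl 0), f k := by
      refine iSup_le fun l => ?_
      rw [← hfr l]
      exact le_iSup₂ (f := fun k (_ : k ≠ Sum.inl 0) => f k) (Sum.inr l)
        (fun h => nomatch h)
    exact sup_le hYle hSle hgYS
  have hdisjY : ∀ g ∈ Y, g ∈ X ⊔ S → g = 0 := by
    intro g hgY hgXS
    refine Submodule.disjoint_def.1 (hind (Sum.inl 1)) g (by rw [hf1]; exact hgY) ?_
    have hXle : X ≤ ⨆ k, ⨆ (_ : k ≠ Sum.inl 1), f k := by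
      rw [← hf0]
      exact le_iSup₂ (f := fun k (_ : k ≠ Sum.inl 1) => f k) (Sum.inl 0)
        (fun h => absurd (Sum.inl_injective h) (by decide))
    have hSle : S ≤ ⨆ k, ⨆ (_ : k ≠ Sum.inl 1), f k := by
      refine iSup_le fun l => ?_
      rw [← hfr l]
      exact le_iSup₂ (f := fun k (_ : k ≠ Sum.inl 1) => f k) (Sum.inr l)
        (fun h => nomatch h)
    exact sup_le hXle hSle hgXS
  have hUNIQ : ∀ ξ θ σ : R, ξ ∈ X → θ ∈ Y → σ ∈ S → ξ + θ + σ = 0 →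
      ξ = 0 ∧ θ = 0 ∧ σ = 0 := by
    intro ξ θ σ hξ hθ hσ hsum0
    have hξ0 : ξ = 0 := by
      refine hdisjX ξ hξ ?_
      have : ξ = -θ + -σ := by linear_combination hsum0
      rw [this]
      exact add_mem (Submodule.mem_sup_left (neg_mem hθ)) (Submodule.mem_sup_right (neg_mem hσ))
    have hθ0 : θ = 0 := by
      refine hdisjY θ hθ ?_
      have : θ = -σ := by rw [hξ0] at hsum0; linear_combination hsum0
      rw [this]
      exact Submodule.mem_sup_right (neg_mem hσ)
    refine ⟨hξ0, hθ0, ?_⟩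
    rw [hξ0, hθ0] at hsum0
    linear_combination hsum0
  have hDEC : ∀ g ∈ maximalIdeal R, ∃ c d σ, σ ∈ S ∧ g = c * x + d * y + σ := by
    intro g hg
    rw [← hsup] at hg
    obtain ⟨pq, hpq, σ, hσ, hgs⟩ := Submodule.mem_sup.1 hg
    obtain ⟨ξ, hξ, θ, hθ, hpqs⟩ := Submodule.mem_sup.1 hpq
    obtain ⟨c, hc⟩ := Ideal.mem_span_singleton'.1 hξ
    obtain ⟨d, hd⟩ := Ideal.mem_span_singleton'.1 hθ
    exact ⟨c, d, σ, hσ, by rw [← hgs, ← hpqs, hc, hd]⟩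
  have hMS0 : ∀ m ∈ maximalIdeal R, ∀ σ ∈ S, m * σ = 0 := by
    intro m hm σ hσ
    obtain ⟨F, cc, hcc⟩ := mem_iSup_span (hS ▸ hσ)
    rw [hcc, Finset.mul_sum]
    refine Finset.sum_eq_zero fun l _ => ?_
    have hw0 := (simple_span_facts (hsimple l)).2 m hm
    rw [show m * (cc l * w l) = cc l * (m * w l) by ring, hw0, mul_zero]
  have hxM : x ∈ maximalIdeal R := by
    rw [← hsup]
    exact Submodule.mem_sup_left (Submodule.mem_sup_left (Submodule.mem_span_singleton_self _))
  have hyM : y ∈ maximalIdeal R := by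
    rw [← hsup]
    exact Submodule.mem_sup_left (Submodule.mem_sup_right (Submodule.mem_span_singleton_self _))
  have hyx : y * x = 0 := by
    refine hdisjX (y * x) (Ideal.mem_span_singleton'.2 ⟨y, rfl⟩) ?_
    exact Submodule.mem_sup_left (Ideal.mem_span_singleton'.2 ⟨x, by ring⟩)
  have hxy : x * y = 0 := by rw [mul_comm]; exact hyx
  have hpowM : ∀ (z : R), z ∈ maximalIdeal R → ∀ a : ℕ, 1 ≤ a → z ^ a ∈ maximalIdeal R := by
    intro z hz a ha
    obtain ⟨a', rfl⟩ : ∃ a', a = a' + 1 := ⟨a - 1, by omega⟩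
    rw [pow_succ]
    exact Ideal.mul_mem_left _ _ hz
  have hyxa : ∀ a : ℕ, 1 ≤ a → y * x ^ a = 0 := by
    intro a ha
    obtain ⟨a', rfl⟩ : ∃ a', a = a' + 1 := ⟨a - 1, by omega⟩
    linear_combination x ^ a' * hyx
  have hxya : ∀ a : ℕ, 1 ≤ a → x * y ^ a = 0 := by
    intro a ha
    obtain ⟨a', rfl⟩ : ∃ a', a = a' + 1 := ⟨a - 1, by omega⟩
    linear_combination y ^ a' * hxy
  have hσxa : ∀ σ ∈ S, ∀ a : ℕ, 1 ≤ a → σ * x ^ a = 0 := by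
    intro σ hσ a ha
    rw [mul_comm]
    exact hMS0 _ (hpowM x hxM a ha) σ hσ
  have hσya : ∀ σ ∈ S, ∀ a : ℕ, 1 ≤ a → σ * y ^ a = 0 := by
    intro σ hσ a ha
    rw [mul_comm]
    exact hMS0 _ (hpowM y hyM a ha) σ hσ
  have hMx : ∀ m ∈ maximalIdeal R, ∃ c, m * x = c * (x * x) := by
    intro m hm
    obtain ⟨c, d, σ, hσ, hrep⟩ := hDEC m hm
    refine ⟨c, ?_⟩
    rw [hrep]
    have h1 : σ * x = 0 := by have := hσxa σ hσ 1 le_rfl; rwa [pow_one] at this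
    linear_combination d * hyx + h1
  have hMy : ∀ m ∈ maximalIdeal R, ∃ c, m * y = c * (y * y) := by
    intro m hm
    obtain ⟨c, d, σ, hσ, hrep⟩ := hDEC m hm
    refine ⟨d, ?_⟩
    rw [hrep]
    have h1 : σ * y = 0 := by have := hσya σ hσ 1 le_rfl; rwa [pow_one] at this
    linear_combination c * hxy + h1
  have hzmulx : ∀ c ∈ maximalIdeal R, ∀ a : ℕ, 1 ≤ a → ∃ c₁, c * x ^ a = c₁ * x ^ (a+1) := by
    intro c hc a ha
    obtain ⟨c₁, c₂, σ, hσ, hrep⟩ := hDEC c hc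
    refine ⟨c₁, ?_⟩
    rw [hrep]
    linear_combination c₂ * hyxa a ha + hσxa σ hσ a ha
  have hzmuly : ∀ c ∈ maximalIdeal R, ∀ a : ℕ, 1 ≤ a → ∃ c₁, c * y ^ a = c₁ * y ^ (a+1) := by
    intro c hc a ha
    obtain ⟨c₁, c₂, σ, hσ, hrep⟩ := hDEC c hc
    refine ⟨c₂, ?_⟩
    rw [hrep]
    linear_combination c₁ * hxya a ha + hσya σ hσ a ha
  have hchainX : ∀ N : Ideal R, N ≤ Ideal.span ({x} : Set R) →
      N = ⊥ ∨ ∃ j, 1 ≤ j ∧ x ^ j ≠ 0 ∧ N = Ideal.span ({x ^ j} : Set R) := by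
    intro N hN
    by_cases hx0 : x = 0
    · left
      refine le_bot_iff.1 (le_trans hN ?_)
      rw [hx0, show Ideal.span ({(0:R)} : Set R) = ⊥ from Ideal.span_singleton_eq_bot.2 rfl]
    rcases chain_classify hx0 hxM hMx hpx N hN with h | ⟨j, hj, hNj⟩
    · exact Or.inl h
    by_cases hxj : x ^ j = 0
    · left
      rw [hNj, hxj, show Ideal.span ({(0:R)} : Set R) = ⊥ from Ideal.span_singleton_eq_bot.2 rfl]
    · exact Or.inr ⟨j, hj, hxj, hNj⟩
  have hchainY : ∀ N : Ideal R, N ≤ Ideal.span ({y} : Set R) →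
      N = ⊥ ∨ ∃ j, 1 ≤ j ∧ y ^ j ≠ 0 ∧ N = Ideal.span ({y ^ j} : Set R) := by
    intro N hN
    by_cases hy0 : y = 0
    · left
      refine le_bot_iff.1 (le_trans hN ?_)
      rw [hy0, show Ideal.span ({(0:R)} : Set R) = ⊥ from Ideal.span_singleton_eq_bot.2 rfl]
    rcases chain_classify hy0 hyM hMy hpy N hN with h | ⟨j, hj, hNj⟩
    · exact Or.inl h
    by_cases hyj : y ^ j = 0
    · left
      rw [hNj, hyj, show Ideal.span ({(0:R)} : Set R) = ⊥ from Ideal.span_singleton_eq_bot.2 rfl]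
    · exact Or.inr ⟨j, hj, hyj, hNj⟩
  -- semisimple part of I
  obtain ⟨T, hTI₀, hTzero, hTsup⟩ := zorn_semisimple (I ⊓ S)
    (fun g hg r hr => hMS0 r hr g hg.2)
  have hTI : ∀ t ∈ T, t ∈ I := fun t ht => (hTI₀ t ht).1
  set A : Ideal R := X ⊓ (I ⊔ (Y ⊔ S)) with hAdef
  have hAmem : ∀ (g c d σ : R), g ∈ I → σ ∈ S → g = c*x + d*y + σ → c * x ∈ A := by
    intro g c d σ hg hσ hrep
    refine ⟨Ideal.mem_span_singleton'.2 ⟨c, rfl⟩, ?_⟩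
    refine Submodule.mem_sup.2 ⟨g, hg, -(d*y) - σ, ?_, by rw [hrep]; ring⟩
    exact sub_mem (neg_mem (Submodule.mem_sup_left (Ideal.mem_span_singleton'.2 ⟨d, rfl⟩)))
      (Submodule.mem_sup_right hσ)
  have hArev : ∀ ξ ∈ A, ∃ g ∈ I, ∃ d σ, σ ∈ S ∧ g = ξ + d*y + σ := by
    intro ξ hξ
    obtain ⟨g, hg, v, hv, hgv⟩ := Submodule.mem_sup.1 hξ.2
    obtain ⟨θ', hθ', σ', hσ', hvs⟩ := Submodule.mem_sup.1 hv
    obtain ⟨d, hd⟩ := Ideal.mem_span_singleton'.1 hθ'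
    exact ⟨g, hg, -d, -σ', neg_mem hσ', by rw [← hgv, ← hvs]; linear_combination hd⟩
  by_cases hA0 : A = ⊥
  · -- CASE 1 : I has no x-component
    have hrepYS : ∀ g ∈ I, ∃ d σ, σ ∈ S ∧ g = d * y + σ := by
      intro g hg
      obtain ⟨c, d, σ, hσ, hrep⟩ := hDEC g (hIM hg)
      have hcx : c * x = 0 := by
        have := hAmem g c d σ hg hσ hrep
        rw [hA0] at this
        exact (Submodule.mem_bot _).1 this
      exact ⟨d, σ, hσ, by rw [hrep, hcx, zero_add]⟩
    set B : Ideal R := Y ⊓ (I ⊔ S) with hBdef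
    have hBmem : ∀ (g d σ : R), g ∈ I → σ ∈ S → g = d*y + σ → d * y ∈ B := by
      intro g d σ hg hσ hrep
      refine ⟨Ideal.mem_span_singleton'.2 ⟨d, rfl⟩, ?_⟩
      exact Submodule.mem_sup.2 ⟨g, hg, -σ, neg_mem hσ, by rw [hrep]; ring⟩
    by_cases hB0 : B = ⊥
    · -- CASE 1a : I is semisimple
      have hIS : ∀ g ∈ I, g ∈ S := by
        intro g hg
        obtain ⟨d, σ, hσ, hrep⟩ := hrepYS g hg
        have hdy : d * y = 0 := by
          have := hBmem g d σ hg hσ hrep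
          rw [hB0] at this
          exact (Submodule.mem_bot _).1 this
        rw [hrep, hdy, zero_add]
        exact hσ
      refine master 0 0 (zero_mem I) (zero_mem I) T hTI hTzero ?_ ?_
      · intro g hg
        refine ⟨0, 0, g, ?_, by ring⟩
        rw [hTsup]
        exact ⟨hg, hIS g hg⟩
      · intro r s h hh hsum
        exact ⟨by ring, by ring, by linear_combination hsum⟩
    · -- CASE 1b : I = Rv ⊕ semisimple
      obtain ⟨b, hb1, hyb0, hBb, ε, hεu, hεmem⟩ :=
        attain_lemma hyM hchainY hzmuly (A := B) inf_le_left hB0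
      obtain ⟨uu, rfl⟩ := hεu
      obtain ⟨v₀, hv₀I, σ', hσ', hveq⟩ := Submodule.mem_sup.1 hεmem.2
      set σᵥ : R := -(((uu⁻¹ : Rˣ) : R) * σ') with hσᵥdef
      have hσᵥ : σᵥ ∈ S := neg_mem (Submodule.smul_mem _ _ hσ')
      set v : R := ((uu⁻¹ : Rˣ) : R) * v₀ with hvdef
      have hvI : v ∈ I := Ideal.mul_mem_left _ _ hv₀I
      have hvrep : v = y ^ b + σᵥ := by
        have hu1 : ((uu⁻¹ : Rˣ) : R) * (uu : R) = 1 := Units.inv_mul uu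
        have h2 : ((uu⁻¹:Rˣ):R) * (v₀ + σ') = ((uu⁻¹:Rˣ):R) * (((uu:Rˣ):R) * y ^ b) := by
          rw [hveq]
        rw [hvdef, hσᵥdef]
        linear_combination h2 + y ^ b * hu1
      refine master v 0 hvI (zero_mem I) T hTI hTzero ?_ ?_
      · intro g hg
        obtain ⟨d, σ, hσ, hrep⟩ := hrepYS g hg
        have hdyB : d * y ∈ B := hBmem g d σ hg hσ hrep
        rw [hBb] at hdyB
        obtain ⟨r', hr'⟩ := Ideal.mem_span_singleton'.1 hdyB
        refine ⟨r', 0, g - r' * v, ?_, by ring⟩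
        rw [hTsup]
        refine ⟨sub_mem hg (Ideal.mul_mem_left _ _ hvI), ?_⟩
        have heq : g - r' * v = σ - r' * σᵥ := by
          rw [hrep, hvrep]
          linear_combination -hr'
        rw [heq]
        exact sub_mem hσ (Submodule.smul_mem _ _ hσᵥ)
      · intro r s h hh hsum
        have hhS : h ∈ S := by
          have : h ∈ I ⊓ S := by rw [← hTsup]; exact hh
          exact this.2
        have hsum2 : (0:R) + r * y ^ b + (r * σᵥ + h) = 0 := by
          rw [hvrep] at hsum
          linear_combination hsum
        have hybY : y ^ b ∈ Y := by
          have := pow_mem_span_pow (z := y) hb1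
          rwa [pow_one] at this
        obtain ⟨-, hry, hrest⟩ := hUNIQ _ _ _ (zero_mem X)
          (Ideal.mul_mem_left _ _ hybY)
          (add_mem (show r * σᵥ ∈ S from Submodule.smul_mem _ _ hσᵥ) hhS) hsum2
        have hrM : r ∈ maximalIdeal R := by
          rcases unit_or_mem r with hru | hrM
          · exact absurd (eq_zero_of_unit_mul hru hry) hyb0
          · exact hrM
        have hrσ : r * σᵥ = 0 := hMS0 r hrM σᵥ hσᵥ
        have hh0 : h = 0 := by rw [hrσ, zero_add] at hrest; exact hrest
        refine ⟨?_, by ring, hh0⟩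
        rw [hvrep, mul_add, hry, hrσ, add_zero]
  · -- CASE 2 : A ≠ ⊥
    obtain ⟨a, ha1, hxa0, hAa, ε, hεu, hεmem⟩ :=
      attain_lemma hxM hchainX hzmulx (A := A) inf_le_left hA0
    obtain ⟨uu, rfl⟩ := hεu
    obtain ⟨g₀, hg₀I, d₀, σ₀, hσ₀, hg₀rep⟩ := hArev _ hεmem
    set θ : R := (((uu⁻¹ : Rˣ) : R) * d₀) * y with hθdef
    have hθY : θ ∈ Y := Ideal.mem_span_singleton'.2 ⟨_, rfl⟩
    set σᵤ : R := ((uu⁻¹ : Rˣ) : R) * σ₀ with hσᵤdef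
    have hσᵤ : σᵤ ∈ S := Submodule.smul_mem _ _ hσ₀
    set u : R := ((uu⁻¹ : Rˣ) : R) * g₀ with hudef
    have huI : u ∈ I := Ideal.mul_mem_left _ _ hg₀I
    have hu1 : ((uu⁻¹ : Rˣ) : R) * (uu : R) = 1 := Units.inv_mul uu
    have hurep : u = x ^ a + θ + σᵤ := by
      have h2 : ((uu⁻¹:Rˣ):R) * g₀
          = ((uu⁻¹:Rˣ):R) * (((uu:Rˣ):R) * x ^ a + d₀ * y + σ₀) := by
        rw [← hg₀rep]
      rw [hudef, hθdef, hσᵤdef]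
      linear_combination h2 + x ^ a * hu1
    have hxaX : x ^ a ∈ X := by
      have := pow_mem_span_pow (z := x) ha1
      rwa [pow_one] at this
    have huzero : ∀ (θ1 σ1 p1 : R), θ1 ∈ Y → σ1 ∈ S → p1 = x ^ a + θ1 + σ1 →
        ∀ r h : R, h ∈ S → r * p1 + h = 0 → r * p1 = 0 ∧ h = 0 := by
      intro θ1 σ1 p1 hθ1Y hσ1S hp1rep r h hhS hsum
      have hsum2 : r * x ^ a + r * θ1 + (r * σ1 + h) = 0 := by
        rw [hp1rep] at hsum
        linear_combination hsum
      obtain ⟨hrx, hrθ, hrest⟩ := hUNIQ _ _ _ (Ideal.mul_mem_left _ _ hxaX)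
        (Ideal.mul_mem_left _ _ hθ1Y)
        (add_mem (show r * σ1 ∈ S from Submodule.smul_mem _ _ hσ1S) hhS) hsum2
      have hrM : r ∈ maximalIdeal R := by
        rcases unit_or_mem r with hru | hrM
        · exact absurd (eq_zero_of_unit_mul hru hrx) hxa0
        · exact hrM
      have hrσ : r * σ1 = 0 := hMS0 r hrM σ1 hσ1S
      have hh0 : h = 0 := by rw [hrσ, zero_add] at hrest; exact hrest
      refine ⟨?_, hh0⟩
      rw [hp1rep, mul_add, mul_add, hrx, hrθ, hrσ]
      ring
    set I' : Ideal R := I ⊓ (Y ⊔ S) with hI'def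
    set B' : Ideal R := Y ⊓ (I' ⊔ S) with hB'def
    have hstep1 : ∀ (θ1 σ1 p1 : R), θ1 ∈ Y → σ1 ∈ S → p1 ∈ I → p1 = x ^ a + θ1 + σ1 →
        ∀ g ∈ I, ∃ r d σ₁, σ₁ ∈ S ∧ g - r * p1 ∈ I' ∧ g - r * p1 = d * y + σ₁ := by
      intro θ1 σ1 p1 hθ1Y hσ1S hp1I hp1rep g hg
      obtain ⟨c, d, σ, hσ, hrep⟩ := hDEC g (hIM hg)
      have hcxA : c * x ∈ A := hAmem g c d σ hg hσ hrep
      rw [hAa] at hcxA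
      obtain ⟨r, hr⟩ := Ideal.mem_span_singleton'.1 hcxA
      obtain ⟨dθ, hdθ⟩ := Ideal.mem_span_singleton'.1 hθ1Y
      have heq : g - r * p1 = (d - r * dθ) * y + (σ - r * σ1) := by
        rw [hrep, hp1rep]
        linear_combination -hr + r * hdθ
      refine ⟨r, d - r * dθ, σ - r * σ1,
        sub_mem hσ (Submodule.smul_mem _ _ hσ1S), ⟨sub_mem hg (Ideal.mul_mem_left _ _ hp1I), ?_⟩,
        heq⟩
      rw [heq]
      exact add_mem (Submodule.mem_sup_left (Ideal.mem_span_singleton'.2 ⟨_, rfl⟩))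
        (Submodule.mem_sup_right (sub_mem hσ (Submodule.smul_mem _ _ hσ1S)))
    have hI'B : ∀ g' d σ₁ : R, g' ∈ I' → σ₁ ∈ S → g' = d * y + σ₁ → d * y ∈ B' := by
      intro g' d σ₁ hg' hσ₁ hrep
      refine ⟨Ideal.mem_span_singleton'.2 ⟨d, rfl⟩, ?_⟩
      exact Submodule.mem_sup.2 ⟨g', hg', -σ₁, neg_mem hσ₁, by rw [hrep]; ring⟩
    by_cases hθB : θ ∈ B'
    · by_cases hB'0 : B' = ⊥
      · -- CASE 2a-i : single generator u with trivial y-part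
        have hθ0 : θ = 0 := by rw [hB'0] at hθB; exact (Submodule.mem_bot _).1 hθB
        refine master u 0 huI (zero_mem I) T hTI hTzero ?_ ?_
        · intro g hg
          obtain ⟨r, d, σ₁, hσ₁, hgI', heq⟩ := hstep1 θ σᵤ u hθY hσᵤ huI hurep g hg
          have hdyB : d * y ∈ B' := hI'B _ _ _ hgI' hσ₁ heq
          rw [hB'0] at hdyB
          have hdy0 : d * y = 0 := (Submodule.mem_bot _).1 hdyB
          refine ⟨r, 0, g - r * u, ?_, by ring⟩
          rw [hTsup]
          refine ⟨sub_mem hg (Ideal.mul_mem_left _ _ huI), ?_⟩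
          rw [heq, hdy0, zero_add]
          exact hσ₁
        · intro r s h hh hsum
          have hhS : h ∈ S := by rw [hTsup] at hh; exact hh.2
          have hres := huzero θ σᵤ u hθY hσᵤ hurep r h hhS (by linear_combination hsum)
          exact ⟨hres.1, by ring, hres.2⟩
      · -- CASE 2a-ii : two generators
        obtain ⟨b', hb'1, hyb'0, hB'b, ε', hε'u, hε'mem⟩ :=
          attain_lemma hyM hchainY hzmuly (A := B') inf_le_left hB'0
        obtain ⟨vv, rfl⟩ := hε'u
        obtain ⟨g', hg'I', σ'', hσ'', hveq⟩ := Submodule.mem_sup.1 hε'mem.2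
        set σᵥ : R := -(((vv⁻¹ : Rˣ) : R) * σ'') with hσᵥdef
        have hσᵥ : σᵥ ∈ S := neg_mem (Submodule.smul_mem _ _ hσ'')
        set v : R := ((vv⁻¹ : Rˣ) : R) * g' with hvdef
        have hvI' : v ∈ I' := Ideal.mul_mem_left _ _ hg'I'
        have hvI : v ∈ I := hvI'.1
        have hvrep : v = y ^ b' + σᵥ := by
          have hv1 : ((vv⁻¹ : Rˣ) : R) * (vv : R) = 1 := Units.inv_mul vv
          have h2 : ((vv⁻¹:Rˣ):R) * (g' + σ'')
              = ((vv⁻¹:Rˣ):R) * (((vv:Rˣ):R) * y ^ b') := by rw [hveq]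
          rw [hvdef, hσᵥdef]
          linear_combination h2 + y ^ b' * hv1
        rw [hB'b] at hθB
        obtain ⟨cθ, hcθ⟩ := Ideal.mem_span_singleton'.1 hθB
        set u' : R := u - cθ * v with hu'def
        have hu'I : u' ∈ I := sub_mem huI (Ideal.mul_mem_left _ _ hvI)
        set σ'u : R := σᵤ - cθ * σᵥ with hσ'udef
        have hσ'uS : σ'u ∈ S := sub_mem hσᵤ (Submodule.smul_mem _ _ hσᵥ)
        have hu'rep : u' = x ^ a + 0 + σ'u := by
          rw [hu'def, hurep, hvrep, hσ'udef]
          linear_combination -hcθ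
        have hybY' : y ^ b' ∈ Y := by
          have := pow_mem_span_pow (z := y) hb'1
          rwa [pow_one] at this
        refine master u' v hu'I hvI T hTI hTzero ?_ ?_
        · intro g hg
          obtain ⟨r, d, σ₁, hσ₁, hgI', heq⟩ :=
            hstep1 0 σ'u u' (zero_mem Y) hσ'uS hu'I hu'rep g hg
          have hdyB : d * y ∈ B' := hI'B _ _ _ hgI' hσ₁ heq
          rw [hB'b] at hdyB
          obtain ⟨s', hs'⟩ := Ideal.mem_span_singleton'.1 hdyB
          refine ⟨r, s', g - r * u' - s' * v, ?_, by ring⟩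
          rw [hTsup]
          refine ⟨sub_mem (sub_mem hg (Ideal.mul_mem_left _ _ hu'I))
            (Ideal.mul_mem_left _ _ hvI), ?_⟩
          have heq2 : g - r * u' - s' * v = σ₁ - s' * σᵥ := by
            have h3 : g - r * u' = d * y + σ₁ := heq
            rw [sub_eq_iff_eq_add] at h3
            rw [h3, hvrep]
            linear_combination -hs'
          rw [heq2]
          exact sub_mem hσ₁ (Submodule.smul_mem _ _ hσᵥ)
        · intro r s h hh hsum
          have hhS : h ∈ S := by rw [hTsup] at hh; exact hh.2
          have hsum2 : r * x ^ a + s * y ^ b' + (r * σ'u + (s * σᵥ + h)) = 0 := by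
            rw [hu'rep, hvrep] at hsum
            linear_combination hsum
          obtain ⟨hrx, hsy, hrest⟩ := hUNIQ _ _ _ (Ideal.mul_mem_left _ _ hxaX)
            (Ideal.mul_mem_left _ _ hybY')
            (add_mem (show r * σ'u ∈ S from Submodule.smul_mem _ _ hσ'uS)
              (add_mem (show s * σᵥ ∈ S from Submodule.smul_mem _ _ hσᵥ) hhS)) hsum2
          have hrM : r ∈ maximalIdeal R := by
            rcases unit_or_mem r with hru | hrM
            · exact absurd (eq_zero_of_unit_mul hru hrx) hxa0
            · exact hrM
          have hsM : s ∈ maximalIdeal R := by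
            rcases unit_or_mem s with hsu | hsM
            · exact absurd (eq_zero_of_unit_mul hsu hsy) hyb'0
            · exact hsM
          have hrσ : r * σ'u = 0 := hMS0 r hrM σ'u hσ'uS
          have hsσ : s * σᵥ = 0 := hMS0 s hsM σᵥ hσᵥ
          have hh0 : h = 0 := by rw [hrσ, hsσ, zero_add, zero_add] at hrest; exact hrest
          refine ⟨?_, ?_, hh0⟩
          · rw [hu'rep, mul_add, mul_add, hrx, hrσ]; ring
          · rw [hvrep, mul_add, hsy, hsσ]; ring
    · -- CASE 2b : θ ∉ B'
      have hθ0 : θ ≠ 0 := fun h0 => hθB (by rw [h0]; exact zero_mem B')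
      have hspanθ : Ideal.span ({θ} : Set R) ≤ Ideal.span ({y} : Set R) := by
        rw [Ideal.span_le, Set.singleton_subset_iff]
        exact hθY
      rcases hchainY _ hspanθ with hbot | ⟨e, he1, hye0, hθe⟩
      · exact absurd (Ideal.span_singleton_eq_bot.1 hbot) hθ0
      have hθmem : θ ∈ Ideal.span ({y ^ e} : Set R) :=
        hθe ▸ Submodule.mem_span_singleton_self θ
      obtain ⟨cθ, hcθ⟩ := Ideal.mem_span_singleton'.1 hθmem
      have hcθu : IsUnit cθ := by
        by_contra hcM
        obtain ⟨c₁, hc₁⟩ := hzmuly cθ hcM e he1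
        have hθsub : Ideal.span ({θ} : Set R) ≤ Ideal.span ({y ^ (e+1)} : Set R) := by
          rw [Ideal.span_le, Set.singleton_subset_iff, ← hcθ, hc₁]
          exact Ideal.mem_span_singleton'.2 ⟨c₁, rfl⟩
        have hmm : y ^ e ∈ Ideal.span ({y ^ (e+1)} : Set R) :=
          hθsub (hθe ▸ Submodule.mem_span_singleton_self _)
        exact strict_pow hyM hye0 hmm
      obtain ⟨u₂, hu₂⟩ := hcθu
      have hθval : θ = ↑u₂ * y ^ e := by rw [hu₂]; exact hcθ.symm
      have hB'le : B' ≤ Ideal.span ({y ^ (e+1)} : Set R) := by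
        by_contra hnle
        rcases hchainY B' inf_le_left with hb | ⟨b', hb'1, hyb'0, hB'b⟩
        · exact hnle (hb ▸ bot_le)
        apply hnle
        rw [hB'b]
        by_cases hble : e + 1 ≤ b'
        · rw [Ideal.span_le, Set.singleton_subset_iff]
          exact pow_mem_span_pow hble
        · exfalso
          apply hθB
          rw [hB'b, hθval]
          exact Ideal.mul_mem_left _ _ (pow_mem_span_pow (by omega))
      have hyu : ∀ d : R, (d * y) * u = (d * ↑u₂) * y ^ (e + 1) := by
        intro d
        have hdyσ : (d * y) * σᵤ = 0 := hMS0 (d * y) (Ideal.mul_mem_left _ _ hyM) σᵤ hσᵤ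
        rw [hurep, hθval]
        linear_combination d * hyxa a ha1 + hdyσ
      refine master u 0 huI (zero_mem I) T hTI hTzero ?_ ?_
      · intro g hg
        obtain ⟨r, d, σ₁, hσ₁, hgI', heq⟩ := hstep1 θ σᵤ u hθY hσᵤ huI hurep g hg
        have hdyB : d * y ∈ B' := hI'B _ _ _ hgI' hσ₁ heq
        have hdymem := hB'le hdyB
        obtain ⟨c₂, hc₂⟩ := Ideal.mem_span_singleton'.1 hdymem
        set d' : R := c₂ * ((u₂⁻¹ : Rˣ) : R) with hd'def
        have hd'u : (d' * y) * u = d * y := by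
          rw [hyu d', hd'def]
          have hun : c₂ * ((u₂⁻¹ : Rˣ) : R) * (u₂ : R) = c₂ := by
            rw [mul_assoc, Units.inv_mul, mul_one]
          rw [hun]
          exact hc₂
        refine ⟨r + d' * y, 0, g - r * u - (d' * y) * u, ?_, by ring⟩
        rw [hTsup]
        refine ⟨sub_mem (sub_mem hg (Ideal.mul_mem_left _ _ huI))
          (Ideal.mul_mem_left _ _ huI), ?_⟩
        have heq2 : g - r * u - (d' * y) * u = σ₁ := by
          rw [hd'u]
          rw [show g - r * u - d * y = (g - r * u) - d * y from rfl, heq]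
          ring
        rw [heq2]
        exact hσ₁
      · intro r s h hh hsum
        have hhS : h ∈ S := by rw [hTsup] at hh; exact hh.2
        have hres := huzero θ σᵤ u hθY hσᵤ hurep r h hhS (by linear_combination hsum)
        exact ⟨hres.1, by ring, hres.2⟩

end BackwardMain

/-- An ideal is an internal direct sum of cyclic `R`-modules. -/
def Ideal.IsDirectSumOfCyclics {R : Type} [CommRing R] (I : Ideal R) : Prop :=
  ∃ (ι : Type) (x : ι → R),
    iSupIndep (fun i => Submodule.span R ({x i} : Set R)) ∧
      (⨆ i, Submodule.span R ({x i} : Set R)) = I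

theorem dssoc_equiv {R : Type} [CommRing R] (I : Ideal R) :
    Ideal.IsDirectSumOfCyclics I ↔ Ideal.IsDirectSumOfCyclicsX I := Iff.rfl

/-- Main theorem: every ideal of a local ring `R` is a direct sum of cyclic modules iff
`M = Rx ⊕ Ry ⊕ (⊕_λ Rw_λ)` with each `Rw_λ` simple and `R/Ann(x)`, `R/Ann(y)` principal
ideal rings. -/
theorem ideals_directSumOfCyclics_iff (R : Type) [CommRing R] [IsLocalRing R] :
    (∀ I : Ideal R, I.IsDirectSumOfCyclics) ↔
      ∃ (Λ : Type) (x y : R) (w : Λ → R),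
        iSupIndep (Sum.elim
          ![Submodule.span R ({x} : Set R), Submodule.span R ({y} : Set R)]
          (fun l : Λ => Submodule.span R ({w l} : Set R))) ∧
        Submodule.span R ({x} : Set R) ⊔ Submodule.span R ({y} : Set R) ⊔
          (⨆ l, Submodule.span R ({w l} : Set R)) = IsLocalRing.maximalIdeal R ∧
        (∀ l, IsSimpleModule R (Submodule.span R ({w l} : Set R))) ∧
        IsPrincipalIdealRing (R ⧸ Ideal.torsionOf R R x) ∧
        IsPrincipalIdealRing (R ⧸ Ideal.torsionOf R R y) := by
  constructor
  · intro H
    exact forward_dir (fun I => (dssoc_equiv I).1 (H I))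
  · rintro ⟨Λ, x, y, w, hind, hsup, hsimple, hpx, hpy⟩ I
    exact (dssoc_equiv I).2 (backward_dir hind hsup hsimple hpx hpy I)
end

section
/- Let (R, M) be a commutative local ring. If every ideal of R is a direct sum of cyclic R-modules, then every ideal of R is a direct sum of cyclic R-modules at most two of which are not simple. -/
open Submodule IsLocalRing

section Helpers

variable {R : Type} [CommRing R]

/-- From independence, a finite sum of multiples of the generators being zero forces each
term to vanish. -/
lemma indep_term_zero {κ : Type} [DecidableEq κ] {t : κ → R}
    (ht : iSupIndep fun k => Submodule.span R ({t k} : Set R))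
    (c : κ → R) (F : Finset κ)
    (h0 : ∑ k ∈ F, c k * t k = 0) : ∀ k ∈ F, c k * t k = 0 := by
  intro j hj
  have hsplit : c j * t j = - ∑ k ∈ F.erase j, c k * t k := by
    have h := Finset.sum_erase_add F (fun k => c k * t k) hj
    rw [h0] at h
    exact eq_neg_of_add_eq_zero_right h
  have h1 : c j * t j ∈ Submodule.span R ({t j} : Set R) := by
    exact Submodule.smul_mem _ (c j) (Submodule.mem_span_singleton_self (t j))
  have h2 : c j * t j ∈ ⨆ k, ⨆ (_ : k ≠ j), Submodule.span R ({t k} : Set R) := by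
    rw [hsplit]
    refine neg_mem (Submodule.sum_mem _ ?_)
    intro k hk
    have hkj : k ≠ j := Finset.ne_of_mem_erase hk
    refine Submodule.mem_iSup_of_mem k (Submodule.mem_iSup_of_mem hkj ?_)
    exact Submodule.smul_mem _ (c k) (Submodule.mem_span_singleton_self (t k))
  exact (Submodule.disjoint_def.mp (ht j)) _ h1 h2

variable [IsLocalRing R]

lemma isUnit_add_of_mem {a b : R} (ha : IsUnit a) (hb : b ∈ maximalIdeal R) :
    IsUnit (a + b) := by
  by_contra hab
  have : a + b ∈ maximalIdeal R := (mem_maximalIdeal _).mpr hab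
  have : a ∈ maximalIdeal R := by
    have := sub_mem this hb; simpa using this
  exact (notMem_maximalIdeal.mpr ha) this

lemma mem_maximalIdeal_of_not_isUnit {a : R} (ha : ¬ IsUnit a) : a ∈ maximalIdeal R :=
  (mem_maximalIdeal _).mpr ha

lemma not_isUnit_of_mem_maximalIdeal {a : R} (ha : a ∈ maximalIdeal R) : ¬ IsUnit a :=
  fun h => notMem_maximalIdeal.mpr h ha

omit [IsLocalRing R] in
lemma unit_of_mul_unit_left {a b : R} (h : IsUnit (a * b)) : IsUnit a :=
  isUnit_of_mul_isUnit_left h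

omit [IsLocalRing R] in
lemma cancel_unit {a x : R} (ha : IsUnit a) (h : a * x = 0) : x = 0 := by
  obtain ⟨u, rfl⟩ := ha
  calc x = ↑u⁻¹ * (↑u * x) := by rw [← mul_assoc, Units.inv_mul, one_mul]
  _ = 0 := by rw [h, mul_zero]

lemma mem_of_mul_sq_zero {x q : R} (hq : q ≠ 0) (h : x * q = 0) :
    x ∈ maximalIdeal R := by
  refine mem_maximalIdeal_of_not_isUnit (fun hx => hq (cancel_unit hx h))

/-- A nonzero cyclic ideal killed by the maximal ideal is simple. -/
lemma simple_of_max_kill {X : R} (hX : X ≠ 0)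
    (hM : ∀ m ∈ maximalIdeal R, m * X = 0) :
    IsSimpleModule R (Submodule.span R ({X} : Set R)) := by
  have hXmem : X ∈ Submodule.span R ({X} : Set R) := Submodule.mem_span_singleton_self X
  set Xe : ↥(Submodule.span R ({X} : Set R)) := ⟨X, hXmem⟩ with hXe_def
  have hXe : Xe ≠ 0 := by
    simp only [hXe_def, ne_eq, Submodule.mk_eq_zero]
    exact hX
  haveI : Nontrivial ↥(Submodule.span R ({X} : Set R)) := nontrivial_of_ne Xe 0 hXe
  refine (isSimpleModule_iff R _).mpr ?_; constructor
  intro N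
  by_cases hN : N = ⊥
  · exact Or.inl hN
  · refine Or.inr ?_
    obtain ⟨ζ, hζN, hζ0⟩ := Submodule.exists_mem_ne_zero_of_ne_bot hN
    obtain ⟨c, hc⟩ := (Submodule.mem_span_singleton).mp ζ.2
    have hcu : IsUnit c := by
      by_contra hcu
      have : c * X = 0 := hM c (mem_maximalIdeal_of_not_isUnit hcu)
      apply hζ0
      ext
      rw [← hc] at *
      simpa [smul_eq_mul] using this
    obtain ⟨u, hu⟩ := hcu
    rw [eq_top_iff]
    intro w _
    obtain ⟨e, he⟩ := (Submodule.mem_span_singleton).mp w.2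
    have hXin : Xe ∈ N := by
      have : ((u⁻¹ : Rˣ) : R) • ζ = Xe := by
        ext
        have h1 : (((u⁻¹ : Rˣ) : R) • ζ : ↥(Submodule.span R ({X} : Set R))).val
            = ((u⁻¹ : Rˣ) : R) * ζ.val := rfl
        rw [h1, ← hc, ← hu]
        simp [smul_eq_mul, ← mul_assoc, hXe_def]
      rw [← this]
      exact N.smul_mem _ hζN
    have : (e : R) • Xe = w := by
      ext
      simpa [smul_eq_mul] using he
    rw [← this]
    exact N.smul_mem _ hXin

end Helpers

section Main

variable {R : Type} [CommRing R] [IsLocalRing R]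

/-- The square lemma: in a ring where every ideal is a direct sum of cyclics, three
independent elements cannot all have nonzero squares. -/
lemma square_lemma (h : ∀ I : Ideal R, I.IsDirectSumOfCyclics) (X Y Z : R)
    (dX : Disjoint (Submodule.span R ({X} : Set R))
      (Submodule.span R ({Y} : Set R) ⊔ Submodule.span R ({Z} : Set R)))
    (dY : Disjoint (Submodule.span R ({Y} : Set R))
      (Submodule.span R ({X} : Set R) ⊔ Submodule.span R ({Z} : Set R)))
    (hX2 : X * X ≠ 0) (hY2 : Y * Y ≠ 0) (hZ2 : Z * Z ≠ 0) : False := by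
  classical
  have hXY : X * Y = 0 := by
    refine Submodule.disjoint_def.mp dX _ ?_ ?_
    · exact Submodule.mem_span_singleton.mpr ⟨Y, by rw [smul_eq_mul]; try ring⟩
    · exact Submodule.mem_sup_left
        (Submodule.mem_span_singleton.mpr ⟨X, by rw [smul_eq_mul]; try ring⟩)
  have hXZ : X * Z = 0 := by
    refine Submodule.disjoint_def.mp dX _ ?_ ?_
    · exact Submodule.mem_span_singleton.mpr ⟨Z, by rw [smul_eq_mul]; try ring⟩
    · exact Submodule.mem_sup_right
        (Submodule.mem_span_singleton.mpr ⟨X, by rw [smul_eq_mul]; try ring⟩)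
  have hYZ : Y * Z = 0 := by
    refine Submodule.disjoint_def.mp dY _ ?_ ?_
    · exact Submodule.mem_span_singleton.mpr ⟨Z, by rw [smul_eq_mul]; try ring⟩
    · exact Submodule.mem_sup_right
        (Submodule.mem_span_singleton.mpr ⟨Y, by rw [smul_eq_mul]; try ring⟩)
  obtain ⟨κ, t, htind, htsup⟩ := h (Submodule.span R ({X + Y, Y + Z} : Set R))
  haveI : DecidableEq κ := Classical.decEq κ
  have hspan : Submodule.span R (Set.range t) = Submodule.span R ({X + Y, Y + Z} : Set R) := by
    rw [Submodule.span_range_eq_iSup]; exact htsup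
  have hu : X + Y ∈ Submodule.span R (Set.range t) := by
    rw [hspan]; exact Submodule.subset_span (by simp)
  have hv : Y + Z ∈ Submodule.span R (Set.range t) := by
    rw [hspan]; exact Submodule.subset_span (by simp)
  obtain ⟨r, hr⟩ := (Finsupp.mem_span_range_iff_exists_finsupp).mp hu
  obtain ⟨s, hs⟩ := (Finsupp.mem_span_range_iff_exists_finsupp).mp hv
  set F : Finset κ := r.support ∪ s.support with hF
  have hrF : ∑ k ∈ F, r k * t k = X + Y := by
    have h1 := Finsupp.sum_of_support_subset r (Finset.subset_union_left (s₂ := s.support))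
      (fun i a => a • t i) (by intro i _; exact zero_smul R (t i))
    rw [h1] at hr
    simpa [smul_eq_mul] using hr
  have hsF : ∑ k ∈ F, s k * t k = Y + Z := by
    have h1 := Finsupp.sum_of_support_subset s (Finset.subset_union_right (s₁ := r.support))
      (fun i a => a • t i) (by intro i _; exact zero_smul R (t i))
    rw [h1] at hs
    simpa [smul_eq_mul] using hs
  have hmem : ∀ k, t k ∈ Submodule.span R ({X + Y, Y + Z} : Set R) := by
    intro k
    rw [← htsup]
    exact le_iSup (fun k => Submodule.span R ({t k} : Set R)) k
      (Submodule.mem_span_singleton_self (t k))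
  choose a b hab using fun k => (Ideal.mem_span_pair).mp (hmem k)
  -- three families of vanishing terms
  have hi : ∀ k ∈ F, (X * s k) * t k = 0 := by
    refine indep_term_zero htind _ F ?_
    have : ∑ k ∈ F, X * s k * t k = X * ∑ k ∈ F, s k * t k := by
      rw [Finset.mul_sum]; exact Finset.sum_congr rfl (by intros; ring)
    rw [this, hsF]
    linear_combination hXY + hXZ
  have hii : ∀ k ∈ F, (Z * r k) * t k = 0 := by
    refine indep_term_zero htind _ F ?_
    have : ∑ k ∈ F, Z * r k * t k = Z * ∑ k ∈ F, r k * t k := by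
      rw [Finset.mul_sum]; exact Finset.sum_congr rfl (by intros; ring)
    rw [this, hrF]
    linear_combination hXZ + hYZ
  have hiii : ∀ k ∈ F, (Y * (r k - s k)) * t k = 0 := by
    refine indep_term_zero htind _ F ?_
    have : ∑ k ∈ F, Y * (r k - s k) * t k
        = Y * (∑ k ∈ F, r k * t k) - Y * (∑ k ∈ F, s k * t k) := by
      rw [Finset.mul_sum, Finset.mul_sum, ← Finset.sum_sub_distrib]
      exact Finset.sum_congr rfl (by intros; ring)
    rw [this, hrF, hsF]
    linear_combination hXY - hYZ
  -- the coefficient sums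
  set A0 : R := ∑ k ∈ F, r k * a k with hA0
  set B0 : R := ∑ k ∈ F, r k * b k with hB0
  have hA : X + Y = A0 * (X + Y) + B0 * (Y + Z) := by
    have h2 : ∑ k ∈ F, r k * t k
        = (∑ k ∈ F, r k * a k) * (X + Y) + (∑ k ∈ F, r k * b k) * (Y + Z) := by
      rw [Finset.sum_mul, Finset.sum_mul, ← Finset.sum_add_distrib]
      exact Finset.sum_congr rfl (fun k _ => by rw [← hab k]; ring)
    exact hrF.symm.trans h2
  have hPX : (1 - A0) * X = 0 := by
    refine Submodule.disjoint_def.mp dX _ ?_ ?_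
    · exact Submodule.mem_span_singleton.mpr ⟨(1 - A0), by rw [smul_eq_mul]⟩
    · have hrel : (1 - A0) * X = -(((1 - A0 - B0) * Y) + ((-B0) * Z)) := by
        linear_combination hA
      rw [hrel]
      refine neg_mem (add_mem ?_ ?_)
      · exact Submodule.mem_sup_left
          (Submodule.mem_span_singleton.mpr ⟨(1 - A0 - B0), by rw [smul_eq_mul]⟩)
      · exact Submodule.mem_sup_right
          (Submodule.mem_span_singleton.mpr ⟨(-B0), by rw [smul_eq_mul]⟩)
  have hXne : X ≠ 0 := fun hh => hX2 (by rw [hh]; ring)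
  have hA0u : IsUnit A0 := by
    have h1 : ¬ IsUnit (1 - A0) := by
      intro hu
      exact hXne (cancel_unit hu hPX)
    have h2 := isUnit_one_sub_self_of_mem_nonunits (1 - A0) ((mem_maximalIdeal _).mp
      (mem_maximalIdeal_of_not_isUnit h1))
    simpa using h2
  have hex : ∃ k ∈ F, IsUnit (r k * a k) := by
    by_contra hex
    push_neg at hex
    have hmemA : A0 ∈ maximalIdeal R := by
      rw [hA0]
      exact Submodule.sum_mem _ (fun k hk => mem_maximalIdeal_of_not_isUnit (hex k hk))
    exact (Ideal.IsMaximal.ne_top (IsLocalRing.maximalIdeal.isMaximal R))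
      (Ideal.eq_top_of_isUnit_mem _ hmemA hA0u)
  obtain ⟨k0, hk0F, hk0u⟩ := hex
  have hr0 : IsUnit (r k0) := isUnit_of_mul_isUnit_left hk0u
  have ha0 : IsUnit (a k0) := isUnit_of_mul_isUnit_right hk0u
  -- component consequences at k0
  have ci : a k0 * (s k0 * (X * X)) = 0 := by
    have h1 := hi k0 hk0F
    have h2 : (X * s k0) * t k0 = a k0 * (s k0 * (X * X))
        + (s k0 * (a k0 + b k0)) * (X * Y) + (s k0 * b k0) * (X * Z) := by
      rw [← hab k0]; ring
    rw [h2, hXY, hXZ] at h1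
    linear_combination h1
  have cii : r k0 * (b k0 * (Z * Z)) = 0 := by
    have h1 := hii k0 hk0F
    have h2 : (Z * r k0) * t k0 = r k0 * (b k0 * (Z * Z))
        + (r k0 * a k0) * (X * Z) + (r k0 * (a k0 + b k0)) * (Y * Z) := by
      rw [← hab k0]; ring
    rw [h2, hXZ, hYZ] at h1
    linear_combination h1
  have ciii : (a k0 + b k0) * ((r k0 - s k0) * (Y * Y)) = 0 := by
    have h1 := hiii k0 hk0F
    have h2 : (Y * (r k0 - s k0)) * t k0 = (a k0 + b k0) * ((r k0 - s k0) * (Y * Y))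
        + ((r k0 - s k0) * a k0) * (X * Y) + ((r k0 - s k0) * b k0) * (Y * Z) := by
      rw [← hab k0]; ring
    rw [h2, hXY, hYZ] at h1
    linear_combination h1
  have hs0 : s k0 ∈ maximalIdeal R := mem_of_mul_sq_zero hX2 (cancel_unit ha0 ci)
  have hb0 : b k0 ∈ maximalIdeal R := mem_of_mul_sq_zero hZ2 (cancel_unit hr0 cii)
  have hab0 : IsUnit (a k0 + b k0) := isUnit_add_of_mem ha0 hb0
  have hrs : r k0 - s k0 ∈ maximalIdeal R :=
    mem_of_mul_sq_zero hY2 (cancel_unit hab0 ciii)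
  have : r k0 ∈ maximalIdeal R := by
    have := add_mem hrs hs0
    simpa using this
  exact not_isUnit_of_mem_maximalIdeal this hr0

omit [IsLocalRing R] in
lemma family_disjoint {ι : Type} {N : ι → Submodule R R} (hind : iSupIndep N)
    {a b c : ι} (hab : a ≠ b) (hac : a ≠ c) : Disjoint (N a) (N b ⊔ N c) := by
  refine (hind a).mono_right (sup_le ?_ ?_)
  · exact le_iSup_of_le b (le_iSup_of_le (Ne.symm hab) le_rfl)
  · exact le_iSup_of_le c (le_iSup_of_le (Ne.symm hac) le_rfl)

omit [IsLocalRing R] in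
/-- The descending chain of ideals `(W^n * E)`. -/
lemma chain_le {W E : R} {n m : ℕ} (hnm : n ≤ m) :
    Submodule.span R ({W ^ m * E} : Set R) ≤ Submodule.span R ({W ^ n * E} : Set R) := by
  rw [Submodule.span_le, Set.singleton_subset_iff]
  refine Submodule.mem_span_singleton.mpr ⟨W ^ (m - n), ?_⟩
  rw [smul_eq_mul, ← mul_assoc, ← pow_add]
  congr 2
  omega

/-- If `f` lies in the `n`-th layer but not the `(n+1)`-st, then `f` generates the
`n`-th layer. -/
lemma gen_step {W E f : R}
    (hU1 : ∀ m ∈ maximalIdeal R, ∃ c : R, m * E = c * (W * E))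
    {n : ℕ} (hfn : f ∈ Submodule.span R ({W ^ n * E} : Set R))
    (hfn1 : f ∉ Submodule.span R ({W ^ (n + 1) * E} : Set R)) :
    Submodule.span R ({W ^ n * E} : Set R) ≤ Submodule.span R ({f} : Set R) := by
  obtain ⟨cc, hcc⟩ := Submodule.mem_span_singleton.mp hfn
  rw [smul_eq_mul] at hcc
  have hccu : IsUnit cc := by
    by_contra hccu
    obtain ⟨c2, hc2⟩ := hU1 cc (mem_maximalIdeal_of_not_isUnit hccu)
    refine hfn1 (Submodule.mem_span_singleton.mpr ⟨c2, ?_⟩)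
    rw [smul_eq_mul, ← hcc, pow_succ]
    linear_combination (-(W ^ n)) * hc2
  obtain ⟨uc, huc⟩ := hccu
  rw [Submodule.span_le, Set.singleton_subset_iff]
  refine Submodule.mem_span_singleton.mpr ⟨↑uc⁻¹, ?_⟩
  rw [smul_eq_mul, ← hcc, ← huc, ← mul_assoc, Units.inv_mul, one_mul]

/-- The intersection of the chain is zero. -/
lemma uniform_core (h : ∀ I : Ideal R, I.IsDirectSumOfCyclics) {W E : R}
    (hWM : W ∈ maximalIdeal R)
    (hU1 : ∀ m ∈ maximalIdeal R, ∃ c : R, m * E = c * (W * E)) :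
    (⨅ n : ℕ, Submodule.span R ({W ^ n * E} : Set R)) = ⊥ := by
  classical
  set K := ⨅ n : ℕ, Submodule.span R ({W ^ n * E} : Set R) with hKdef
  have hcond : ∀ t ∈ K, ∃ m ∈ maximalIdeal R, ∃ y ∈ K, t = m * y := by
    intro t htK
    have ht1 : t ∈ Submodule.span R ({W ^ 1 * E} : Set R) := by
      rw [hKdef] at htK; exact (Submodule.mem_iInf _).mp htK 1
    obtain ⟨d, hd⟩ := Submodule.mem_span_singleton.mp ht1
    rw [smul_eq_mul] at hd
    have htWy : t = W * (d * E) := by rw [← hd, pow_one]; ring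
    by_cases hy : ∃ n : ℕ, d * E ∉ Submodule.span R ({W ^ (n + 1) * E} : Set R)
    · set n0 := Nat.find hy with hn0def
      have hymem : d * E ∈ Submodule.span R ({W ^ n0 * E} : Set R) := by
        rcases Nat.eq_zero_or_pos n0 with h0 | hpos
        · rw [h0]
          refine Submodule.mem_span_singleton.mpr ⟨d, ?_⟩
          rw [smul_eq_mul, pow_zero, one_mul]
        · have := Nat.find_min hy (m := n0 - 1) (by omega)
          rw [not_not] at this
          have heq : n0 - 1 + 1 = n0 := by omega
          rwa [heq] at this
      have hynot : d * E ∉ Submodule.span R ({W ^ (n0 + 1) * E} : Set R) :=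
        Nat.find_spec hy
      have hgen := gen_step hU1 hymem hynot
      have hWn : W ^ n0 * E ∈ Submodule.span R ({d * E} : Set R) :=
        hgen (Submodule.mem_span_singleton_self _)
      obtain ⟨ρ, hρ⟩ := Submodule.mem_span_singleton.mp hWn
      rw [smul_eq_mul] at hρ
      have ht2 : t ∈ Submodule.span R ({W ^ (n0 + 2) * E} : Set R) := by
        rw [hKdef] at htK; exact (Submodule.mem_iInf _).mp htK (n0 + 2)
      obtain ⟨σ, hσ⟩ := Submodule.mem_span_singleton.mp ht2
      rw [smul_eq_mul] at hσ
      have hρt : ρ * t = W ^ (n0 + 1) * E := by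
        calc ρ * t = W * (ρ * (d * E)) := by rw [htWy]; ring
        _ = W * (W ^ n0 * E) := by rw [hρ]
        _ = W ^ (n0 + 1) * E := by rw [pow_succ]; ring
      have ht3 : (1 - σ * W * ρ) * t = 0 := by
        calc (1 - σ * W * ρ) * t = t - σ * W * (ρ * t) := by ring
        _ = 0 := by
            rw [hρt, ← hσ, show n0 + 2 = (n0 + 1) + 1 from rfl, pow_succ]
            ring
      have hmem2 : σ * W * ρ ∈ maximalIdeal R := by
        exact Ideal.mul_mem_right _ _ (Ideal.mul_mem_left _ σ hWM)
      have ht0 : t = 0 := by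
        refine cancel_unit (isUnit_one_sub_self_of_mem_nonunits _ ?_) ht3
        exact (mem_maximalIdeal _).mp hmem2
      exact ⟨W, hWM, 0, K.zero_mem, by rw [ht0, mul_zero]⟩
    · push_neg at hy
      have hyK : d * E ∈ K := by
        rw [hKdef]
        refine (Submodule.mem_iInf _).mpr fun n => ?_
        rcases Nat.eq_zero_or_pos n with h0 | hpos
        · rw [h0]
          refine Submodule.mem_span_singleton.mpr ⟨d, ?_⟩
          rw [smul_eq_mul, pow_zero, one_mul]
        · have := hy (n - 1)
          have heq : n - 1 + 1 = n := by omega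
          rwa [heq] at this
      exact ⟨W, hWM, d * E, hyK, htWy⟩
  -- Nakayama using the hypothesis h
  obtain ⟨τ, tt, htt_ind, htt_sup⟩ := h K
  have hall : ∀ j0 : τ, tt j0 = 0 := by
    intro j0
    haveI : DecidableEq τ := Classical.decEq τ
    have hj0 : tt j0 ∈ K := by
      rw [← htt_sup]
      exact le_iSup (fun k => Submodule.span R ({tt k} : Set R)) j0
        (Submodule.mem_span_singleton_self _)
    obtain ⟨m, hmM, y, hyK, hty⟩ := hcond _ hj0
    have hyr : y ∈ Submodule.span R (Set.range tt) := by
      rw [Submodule.span_range_eq_iSup, htt_sup]; exact hyK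
    obtain ⟨c, hc⟩ := Finsupp.mem_span_range_iff_exists_finsupp.mp hyr
    set F' : Finset τ := c.support ∪ {j0} with hF'
    have hj0F : j0 ∈ F' := by simp [hF']
    have e1 : ∑ k ∈ F', c k * tt k = y := by
      have h1 := Finsupp.sum_of_support_subset c
        (Finset.subset_union_left (s₂ := ({j0} : Finset τ)))
        (fun i aa => aa • tt i) (by intro i _; exact zero_smul R (tt i))
      rw [h1] at hc
      simpa only [smul_eq_mul] using hc
    have hsum : ∑ k ∈ F', ((m * c k) - if k = j0 then 1 else 0) * tt k = 0 := by
      have expand : ∀ k, ((m * c k) - if k = j0 then 1 else 0) * tt k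
          = m * (c k * tt k) - (if k = j0 then tt k else 0) := by
        intro k; split <;> ring
      rw [Finset.sum_congr rfl (fun k _ => expand k), Finset.sum_sub_distrib,
        ← Finset.mul_sum, e1, Finset.sum_ite_eq' F' j0 tt, if_pos hj0F, ← hty, sub_self]
    have hterm := indep_term_zero htt_ind _ F' hsum j0 hj0F
    rw [if_pos rfl] at hterm
    have h2 : (1 - m * c j0) * tt j0 = 0 := by linear_combination -hterm
    refine cancel_unit (isUnit_one_sub_self_of_mem_nonunits _ ?_) h2
    exact (mem_maximalIdeal _).mp (Ideal.mul_mem_right _ _ hmM)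
  rw [← htt_sup]
  simp [iSup_eq_bot, hall, Submodule.span_zero_singleton]

/-- Uniformity: two nonzero elements of `span {E}` have a common nonzero multiple. -/
lemma uniform_main (h : ∀ I : Ideal R, I.IsDirectSumOfCyclics) {W E f g : R}
    (hWM : W ∈ maximalIdeal R)
    (hU1 : ∀ m ∈ maximalIdeal R, ∃ c : R, m * E = c * (W * E))
    (hf : f ∈ Submodule.span R ({E} : Set R)) (hg : g ∈ Submodule.span R ({E} : Set R))
    (hf0 : f ≠ 0) (hg0 : g ≠ 0) :
    ∃ ζ : R, ζ ≠ 0 ∧ ζ ∈ Submodule.span R ({f} : Set R) ∧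
      ζ ∈ Submodule.span R ({g} : Set R) := by
  classical
  have hcore := uniform_core h hWM hU1
  have hJ0 : ∀ x : R, x ∈ Submodule.span R ({E} : Set R) →
      x ∈ Submodule.span R ({W ^ 0 * E} : Set R) := by
    intro x hx
    rwa [pow_zero, one_mul]
  have hfind : ∀ x : R, x ∈ Submodule.span R ({E} : Set R) → x ≠ 0 →
      ∃ n : ℕ, x ∈ Submodule.span R ({W ^ n * E} : Set R) ∧
        Submodule.span R ({W ^ n * E} : Set R) ≤ Submodule.span R ({x} : Set R) := by
    intro x hx hx0
    have hex : ∃ n : ℕ, x ∉ Submodule.span R ({W ^ (n + 1) * E} : Set R) := by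
      by_contra hcon
      push_neg at hcon
      apply hx0
      have : x ∈ (⨅ n : ℕ, Submodule.span R ({W ^ n * E} : Set R)) := by
        refine (Submodule.mem_iInf _).mpr fun n => ?_
        rcases Nat.eq_zero_or_pos n with h0 | hpos
        · rw [h0]; exact hJ0 x hx
        · have := hcon (n - 1)
          have heq : n - 1 + 1 = n := by omega
          rwa [heq] at this
      rw [hcore] at this
      simpa using this
    set n0 := Nat.find hex with hn0def
    have hmem : x ∈ Submodule.span R ({W ^ n0 * E} : Set R) := by
      rcases Nat.eq_zero_or_pos n0 with h0 | hpos
      · rw [h0]; exact hJ0 x hx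
      · have := Nat.find_min hex (m := n0 - 1) (by omega)
        rw [not_not] at this
        have heq : n0 - 1 + 1 = n0 := by omega
        rwa [heq] at this
    exact ⟨n0, hmem, gen_step hU1 hmem (Nat.find_spec hex)⟩
  obtain ⟨nf, hfmem, hfgen⟩ := hfind f hf hf0
  obtain ⟨ng, hgmem, hggen⟩ := hfind g hg hg0
  rcases le_total nf ng with hle | hle
  · exact ⟨g, hg0, hfgen (chain_le hle hgmem), Submodule.mem_span_singleton_self g⟩
  · exact ⟨f, hf0, Submodule.mem_span_singleton_self f, hggen (chain_le hle hfmem)⟩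

/-- No three independent, nonzero, non-simple cyclic ideals exist. -/
lemma no_triple (h : ∀ I : Ideal R, I.IsDirectSumOfCyclics) (X Y Z : R)
    (hX0 : X ≠ 0) (hY0 : Y ≠ 0) (hZ0 : Z ≠ 0)
    (dX : Disjoint (Submodule.span R ({X} : Set R))
      (Submodule.span R ({Y} : Set R) ⊔ Submodule.span R ({Z} : Set R)))
    (dY : Disjoint (Submodule.span R ({Y} : Set R))
      (Submodule.span R ({X} : Set R) ⊔ Submodule.span R ({Z} : Set R)))
    (dZ : Disjoint (Submodule.span R ({Z} : Set R))
      (Submodule.span R ({X} : Set R) ⊔ Submodule.span R ({Y} : Set R)))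
    (mX : ∃ m ∈ maximalIdeal R, m * X ≠ 0)
    (mY : ∃ m ∈ maximalIdeal R, m * Y ≠ 0)
    (mZ : ∃ m ∈ maximalIdeal R, m * Z ≠ 0) : False := by
  classical
  have hXM : X ∈ maximalIdeal R := by
    refine mem_maximalIdeal_of_not_isUnit fun hu => ?_
    have htop : Submodule.span R ({X} : Set R) = ⊤ := Ideal.span_singleton_eq_top.mpr hu
    have hY : Y ∈ Submodule.span R ({Y} : Set R) ⊔ Submodule.span R ({Z} : Set R) :=
      Submodule.mem_sup_left (Submodule.mem_span_singleton_self Y)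
    exact hY0 (Submodule.disjoint_def.mp dX Y (htop ▸ Submodule.mem_top) hY)
  have hYM : Y ∈ maximalIdeal R := by
    refine mem_maximalIdeal_of_not_isUnit fun hu => ?_
    have htop : Submodule.span R ({Y} : Set R) = ⊤ := Ideal.span_singleton_eq_top.mpr hu
    have hX : X ∈ Submodule.span R ({X} : Set R) ⊔ Submodule.span R ({Z} : Set R) :=
      Submodule.mem_sup_left (Submodule.mem_span_singleton_self X)
    exact hX0 (Submodule.disjoint_def.mp dY X (htop ▸ Submodule.mem_top) hX)
  have hZM : Z ∈ maximalIdeal R := by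
    refine mem_maximalIdeal_of_not_isUnit fun hu => ?_
    have htop : Submodule.span R ({Z} : Set R) = ⊤ := Ideal.span_singleton_eq_top.mpr hu
    have hX : X ∈ Submodule.span R ({X} : Set R) ⊔ Submodule.span R ({Y} : Set R) :=
      Submodule.mem_sup_left (Submodule.mem_span_singleton_self X)
    exact hX0 (Submodule.disjoint_def.mp dZ X (htop ▸ Submodule.mem_top) hX)
  obtain ⟨ιM, w, hwind, hwsup⟩ := h (maximalIdeal R)
  haveI : DecidableEq ιM := Classical.decEq ιM
  have hww : ∀ i j, i ≠ j → w i * w j = 0 := by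
    intro i j hij
    refine Submodule.disjoint_def.mp (hwind i) _ ?_ ?_
    · exact Submodule.mem_span_singleton.mpr ⟨w j, by rw [smul_eq_mul]; try ring⟩
    · refine Submodule.mem_iSup_of_mem j (Submodule.mem_iSup_of_mem (Ne.symm hij) ?_)
      exact Submodule.mem_span_singleton.mpr ⟨w i, by rw [smul_eq_mul]; try ring⟩
  have hwM : ∀ j, w j ∈ maximalIdeal R := fun j => by
    rw [← hwsup]
    exact Submodule.mem_iSup_of_mem j (Submodule.mem_span_singleton_self _)
  have hexp : ∀ m ∈ maximalIdeal R, ∃ c : ιM →₀ R,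
      (c.sum fun i cc => cc * w i) = m := by
    intro m hm
    have hmem : m ∈ Submodule.span R (Set.range w) := by
      rw [Submodule.span_range_eq_iSup, hwsup]; exact hm
    obtain ⟨c, hc⟩ := Finsupp.mem_span_range_iff_exists_finsupp.mp hmem
    exact ⟨c, by simpa [smul_eq_mul] using hc⟩
  have hwV : ∀ V : R, V ∈ maximalIdeal R → ∀ j : ιM,
      ∃ cc : R, w j * V = cc * (w j * w j) := by
    intro V hV j
    obtain ⟨xc, hxc⟩ := hexp V hV
    refine ⟨xc j, ?_⟩
    rw [← hxc, Finsupp.sum, Finset.mul_sum]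
    refine (Finset.sum_eq_single j ?_ ?_).trans (by ring)
    · intro i _ hij
      rw [show w j * (xc i * w i) = xc i * (w i * w j) from by ring, hww i j hij, mul_zero]
    · intro hj
      rw [Finsupp.notMem_support_iff.mp hj]; ring
  have hcol : ∀ V : R, (∃ m ∈ maximalIdeal R, m * V ≠ 0) → ∃ j, w j * V ≠ 0 := by
    intro V hmV
    obtain ⟨m, hmM, hmV0⟩ := hmV
    by_contra hcon
    push_neg at hcon
    apply hmV0
    obtain ⟨c, hc⟩ := hexp m hmM
    rw [← hc, Finsupp.sum, Finset.sum_mul]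
    refine Finset.sum_eq_zero fun i _ => ?_
    rw [show c i * w i * V = c i * (w i * V) from by ring, hcon i, mul_zero]
  obtain ⟨jX, hjX⟩ := hcol X mX
  obtain ⟨jY, hjY⟩ := hcol Y mY
  obtain ⟨jZ, hjZ⟩ := hcol Z mZ
  have hpair : ∀ (j : ιM) (V V' : R), V ∈ maximalIdeal R → V' ∈ maximalIdeal R →
      w j * V ≠ 0 → w j * V' ≠ 0 →
      ∃ ζ : R, ζ ≠ 0 ∧ ζ ∈ Submodule.span R ({V} : Set R) ∧
        ζ ∈ Submodule.span R ({V'} : Set R) := by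
    intro j V V' hVM hV'M hV0 hV'0
    obtain ⟨cc, hcc⟩ := hwV V hVM j
    obtain ⟨cc', hcc'⟩ := hwV V' hV'M j
    have hU1 : ∀ m ∈ maximalIdeal R,
        ∃ c2, m * (w j * w j) = c2 * (w j * (w j * w j)) := by
      intro m hm
      obtain ⟨c, hc⟩ := hexp m hm
      refine ⟨c j, ?_⟩
      rw [← hc, Finsupp.sum, Finset.sum_mul]
      refine (Finset.sum_eq_single j ?_ ?_).trans (by ring)
      · intro i _ hij
        rw [show c i * w i * (w j * w j) = (c i * w j) * (w i * w j) from by ring,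
          hww i j hij, mul_zero]
      · intro hj
        rw [Finsupp.notMem_support_iff.mp hj]; ring
    obtain ⟨ζ, hζ0, hζf, hζg⟩ := uniform_main h (hwM j) hU1
      (Submodule.mem_span_singleton.mpr ⟨cc, by rw [smul_eq_mul]; exact hcc.symm⟩)
      (Submodule.mem_span_singleton.mpr ⟨cc', by rw [smul_eq_mul]; exact hcc'.symm⟩)
      hV0 hV'0
    refine ⟨ζ, hζ0, ?_, ?_⟩
    · have hle : Submodule.span R ({w j * V} : Set R) ≤ Submodule.span R ({V} : Set R) := by
        rw [Submodule.span_le, Set.singleton_subset_iff]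
        exact Submodule.mem_span_singleton.mpr ⟨w j, by rw [smul_eq_mul]⟩
      exact hle hζf
    · have hle : Submodule.span R ({w j * V'} : Set R) ≤ Submodule.span R ({V'} : Set R) := by
        rw [Submodule.span_le, Set.singleton_subset_iff]
        exact Submodule.mem_span_singleton.mpr ⟨w j, by rw [smul_eq_mul]⟩
      exact hle hζg
  by_cases e1 : jX = jY
  · obtain ⟨ζ, hζ0, h1, h2⟩ := hpair jX X Y hXM hYM hjX (by rw [e1]; exact hjY)
    exact hζ0 (Submodule.disjoint_def.mp dX ζ h1 (Submodule.mem_sup_left h2))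
  by_cases e2 : jX = jZ
  · obtain ⟨ζ, hζ0, h1, h2⟩ := hpair jX X Z hXM hZM hjX (by rw [e2]; exact hjZ)
    exact hζ0 (Submodule.disjoint_def.mp dX ζ h1 (Submodule.mem_sup_right h2))
  by_cases e3 : jY = jZ
  · obtain ⟨ζ, hζ0, h1, h2⟩ := hpair jY Y Z hYM hZM hjY (by rw [e3]; exact hjZ)
    exact hζ0 (Submodule.disjoint_def.mp dY ζ h1 (Submodule.mem_sup_right h2))
  · have hsq : ∀ (j : ιM) (V : R), V ∈ maximalIdeal R → w j * V ≠ 0 →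
        w j * w j ≠ 0 := by
      intro j V hVM hjV hq
      obtain ⟨cc, hcc⟩ := hwV V hVM j
      exact hjV (by rw [hcc, hq, mul_zero])
    exact square_lemma h (w jX) (w jY) (w jZ)
      (family_disjoint hwind e1 e2)
      (family_disjoint hwind (Ne.symm e1) e3)
      (hsq jX X hXM hjX) (hsq jY Y hYM hjY) (hsq jZ Z hZM hjZ)

end Main

/-- If every ideal of a local ring is a direct sum of cyclic modules, then every ideal is
a direct sum of cyclic modules at most two of which are not simple. -/
theorem ideals_directSum_at_most_two_not_simple (R : Type) [CommRing R] [IsLocalRing R]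
    (h : ∀ I : Ideal R, I.IsDirectSumOfCyclics) :
    ∀ I : Ideal R, ∃ (ι : Type) (x : ι → R),
      iSupIndep (fun i => Submodule.span R ({x i} : Set R)) ∧
      (⨆ i, Submodule.span R ({x i} : Set R)) = I ∧
      ∃ i₁ i₂ : ι, ∀ i, ¬ IsSimpleModule R (Submodule.span R ({x i} : Set R)) →
        i = i₁ ∨ i = i₂ := by
  intro I
  obtain ⟨ι, x, hind, hsup⟩ := h I
  classical
  by_cases hne : Nonempty {i : ι // x i ≠ 0}
  case neg =>
    have hz : ∀ i, x i = 0 := by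
      intro i; by_contra hi; exact hne ⟨⟨i, hi⟩⟩
    have hI : I = ⊥ := by
      rw [← hsup]
      simp [iSup_eq_bot, hz, Submodule.span_zero_singleton]
    refine ⟨PUnit, fun _ => 0, ?_, ?_, PUnit.unit, PUnit.unit, ?_⟩
    · intro u
      simp only [Submodule.span_zero_singleton]
      exact disjoint_bot_left
    · rw [hI]
      simp [Submodule.span_zero_singleton]
    · intro i _; left; rfl
  case pos =>
    set ι' := {i : ι // x i ≠ 0} with hι'
    set x' : ι' → R := fun i => x i.1 with hx'
    have hind' : iSupIndep fun i : ι' => Submodule.span R ({x' i} : Set R) := by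
      exact hind.comp (Subtype.val_injective (p := fun i => x i ≠ 0))
    have hsup' : (⨆ i : ι', Submodule.span R ({x' i} : Set R)) = I := by
      rw [← hsup]
      apply le_antisymm
      · exact iSup_le fun i => le_iSup (fun j => Submodule.span R ({x j} : Set R)) i.1
      · refine iSup_le fun i => ?_
        by_cases hi : x i = 0
        · rw [hi, Submodule.span_zero_singleton]; exact bot_le
        · exact le_iSup (fun j : ι' => Submodule.span R ({x' j} : Set R)) ⟨i, hi⟩
    have hno3 : ∀ a b c : ι', a ≠ b → a ≠ c → b ≠ c →
        ¬ IsSimpleModule R (Submodule.span R ({x' a} : Set R)) →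
        ¬ IsSimpleModule R (Submodule.span R ({x' b} : Set R)) →
        ¬ IsSimpleModule R (Submodule.span R ({x' c} : Set R)) → False := by
      intro a b c hab hac hbc ha hb hc
      have hM : ∀ i : ι', ¬ IsSimpleModule R (Submodule.span R ({x' i} : Set R)) →
          ∃ m ∈ maximalIdeal R, m * x' i ≠ 0 := by
        intro i hsimp
        by_contra hcon
        push_neg at hcon
        exact hsimp (simple_of_max_kill i.2 hcon)
      exact no_triple h (x' a) (x' b) (x' c) a.2 b.2 c.2
        (family_disjoint hind' hab hac)
        (family_disjoint hind' (Ne.symm hab) hbc)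
        (family_disjoint hind' (Ne.symm hac) (Ne.symm hbc))
        (hM a ha) (hM b hb) (hM c hc)
    obtain ⟨i0⟩ := hne
    by_cases hb1 : ∃ a : ι', ¬ IsSimpleModule R (Submodule.span R ({x' a} : Set R))
    · obtain ⟨a, ha⟩ := hb1
      by_cases hb2 : ∃ b : ι',
          ¬ IsSimpleModule R (Submodule.span R ({x' b} : Set R)) ∧ b ≠ a
      · obtain ⟨b, hb, hba⟩ := hb2
        refine ⟨ι', x', hind', hsup', a, b, ?_⟩
        intro i hi
        by_contra hcon
        push_neg at hcon
        exact hno3 i a b hcon.1 hcon.2 (Ne.symm hba) hi ha hb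
      · push_neg at hb2
        refine ⟨ι', x', hind', hsup', a, a, ?_⟩
        intro i hi
        exact Or.inl (hb2 i hi)
    · push_neg at hb1
      exact ⟨ι', x', hind', hsup', i0, i0, fun i hi => absurd (hb1 i) hi⟩
end
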